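/- arXiv:0910.1173 — 2 statements merged into one kernel-verified Lean document; each statement's English description precedes it below -/
import Mathlib

section
/- Let n ≥ 1 and let a₁, …, a_n be real numbers, with a₀ = 0, such that the points (0,a₀), (1,a₁), …, (n,a_n) are not all collinear. Let Γ(a₁,…,a_n) ⊆ ℝ² be the union of the segments joining (i−1, a_{i−1}) to (i, a_i) for i = 1,…,n, with length ℓ = Σ_{i=1}^{n} √(1 + (a_i − a_{i−1})²), and let δ be the one-dimensional Hausdorff measure of the frontier of the convex hull of Γ(a₁,…,a_n). Then the inconstancy ℐ(Γ(a₁,…,a_n)) := 2ℓ/δ satisfies 1 ≤ ℐ(Γ(a₁,…,a_n)) ≤ n. -/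
noncomputable section
open MeasureTheory Real Set Filter
open scoped ENNReal

/-- The point `(x, y)` of the Euclidean plane. -/
def pt (x y : ℝ) : EuclideanSpace ℝ (Fin 2) := !₂[x, y]

/-- The polygonal curve `Γ_N` through `(0,u₀), (1,u₁), …, (N,u_N)`: the union of the
segments joining `(i, u_i)` to `(i+1, u_{i+1})` for `i = 0, …, N−1`. -/
def polyCurve (u : ℕ → ℝ) (N : ℕ) : Set (EuclideanSpace ℝ (Fin 2)) :=
  ⋃ i ∈ Finset.range N, segment ℝ (pt i (u i)) (pt (i + 1) (u (i + 1)))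

/-- The length `ℓ(Γ_N) = Σ_{i<N} √(1 + (u_{i+1} − u_i)²)` of the polygonal curve. -/
def polyLength (u : ℕ → ℝ) (N : ℕ) : ℝ :=
  ∑ i ∈ Finset.range N, Real.sqrt (1 + (u (i + 1) - u i) ^ 2)

/-- The perimeter `δ(Γ_N)` of the convex hull of the polygonal curve: the
one-dimensional Hausdorff measure of the frontier of the convex hull. -/
def polyDelta (u : ℕ → ℝ) (N : ℕ) : ℝ :=
  (μH[1] (frontier (convexHull ℝ (polyCurve u N)))).toReal

/-- The inconstancy `ℐ(Γ_N) := 2 ℓ(Γ_N) / δ(Γ_N)` of the polygonal curve. -/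
def polyIncon (u : ℕ → ℝ) (N : ℕ) : ℝ :=
  2 * polyLength u N / polyDelta u N

namespace IC

abbrev E2 : Type := EuclideanSpace ℝ (Fin 2)

@[simp] lemma pt_app0 (x y : ℝ) : pt x y 0 = x := rfl
@[simp] lemma pt_app1 (x y : ℝ) : pt x y 1 = y := rfl

lemma eq_pt (z : E2) : z = pt (z 0) (z 1) := by
  ext i; fin_cases i <;> rfl

lemma combo_pt (r s x y x' y' : ℝ) :
    r • pt x y + s • pt x' y' = pt (r*x + s*x') (r*y + s*y') := by
  ext i; fin_cases i <;> simp [pt]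

lemma add_smul_pt (x y : ℝ) (t u v : ℝ) :
    pt x y + t • (pt u v - pt x y) = pt (x + t*(u - x)) (y + t*(v - y)) := by
  ext i; fin_cases i <;> simp [pt]

lemma dist_pt (x y x' y' : ℝ) :
    dist (pt x y) (pt x' y') = Real.sqrt ((x - x')^2 + (y - y')^2) := by
  rw [EuclideanSpace.dist_eq, Fin.sum_univ_two]
  simp [Real.dist_eq, sq_abs]

lemma abs_sub_coord_le (z w : E2) (i : Fin 2) : |z i - w i| ≤ dist z w := by
  rw [EuclideanSpace.dist_eq]
  have h1 : |z i - w i| = Real.sqrt (dist (z i) (w i) ^ 2) := by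
    rw [Real.dist_eq, Real.sqrt_sq_eq_abs, abs_abs]
  rw [h1]
  apply Real.sqrt_le_sqrt
  exact Finset.single_le_sum (f := fun j => dist (z j) (w j) ^ 2)
    (fun j _ => sq_nonneg _) (Finset.mem_univ i)

lemma hausdorff_segment (u v : E2) : μH[1] (segment ℝ u v) = ENNReal.ofReal (dist u v) := by
  rcases eq_or_ne u v with rfl | huv
  · rw [segment_same, dist_self]
    set w : E2 := EuclideanSpace.single 0 (1:ℝ) with hw
    have hnw : ‖w‖ = 1 := by simp [hw]
    set c : ℝ → E2 := fun t => u + t • w with hc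
    have hiso : Isometry c := Isometry.of_dist_eq (by
      intro s t
      simp only [hc, dist_eq_norm]
      rw [show u + s • w - (u + t • w) = (s - t) • w by rw [sub_smul]; abel]
      rw [norm_smul, hnw, mul_one, Real.norm_eq_abs])
    have himg : ({u} : Set E2) = c '' Icc 0 0 := by
      simp [hc, Set.Icc_self]
    rw [himg, hiso.hausdorffMeasure_image (Or.inl zero_le_one), Set.Icc_self,
      MeasureTheory.hausdorffMeasure_real]
    simp
  · set d := dist u v with hd
    have hdpos : 0 < d := dist_pos.2 huv
    set c : ℝ → E2 := fun t => u + (t / d) • (v - u) with hc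
    have hiso : Isometry c := Isometry.of_dist_eq (by
      intro s t
      simp only [hc, dist_eq_norm]
      rw [show u + (s/d) • (v-u) - (u + (t/d) • (v-u)) = (s/d - t/d) • (v-u) by
        rw [sub_smul]; abel]
      rw [norm_smul, Real.norm_eq_abs, ← norm_sub_rev u v, ← dist_eq_norm, ← hd,
        div_sub_div_same, abs_div, abs_of_pos hdpos,
        div_mul_cancel₀ _ hdpos.ne', Real.norm_eq_abs])
    have himg : segment ℝ u v = c '' Icc 0 d := by
      rw [segment_eq_image']
      ext z
      constructor
      · rintro ⟨θ, ⟨h0, h1⟩, rfl⟩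
        exact ⟨θ * d, ⟨by positivity, by nlinarith⟩, by
          simp only [hc]; rw [mul_div_assoc, div_self hdpos.ne', mul_one]⟩
      · rintro ⟨t, ⟨h0, h1⟩, rfl⟩
        exact ⟨t / d, ⟨by positivity, by rw [div_le_one hdpos]; exact h1⟩, rfl⟩
    rw [himg, hiso.hausdorffMeasure_image (Or.inl zero_le_one),
      MeasureTheory.hausdorffMeasure_real, Real.volume_Icc, sub_zero]

lemma hausdorff_singleton (z : E2) : μH[1] ({z} : Set E2) = 0 := by
  have := hausdorff_segment z z
  rwa [segment_same, dist_self, ENNReal.ofReal_zero] at this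

lemma chain_dist (c : ℕ → E2) {u v : ℕ} (h : u ≤ v) :
    dist (c u) (c v) ≤ ∑ i ∈ Finset.Ico u v, dist (c i) (c (i+1)) := by
  induction v, h using Nat.le_induction with
  | base => simp
  | succ v hv ih =>
      rw [Finset.sum_Ico_succ_top hv]
      exact (dist_triangle (c u) (c v) (c (v+1))).trans (by linarith)

lemma same_route (N : ℕ) (c c' : ℕ → E2) (h0 : c 0 = c' 0) (hn : c N = c' N)
    {i j : ℕ} (hij : i ≤ j) (hj : j ≤ N) :
    2 * dist (c i) (c j) ≤ (∑ t ∈ Finset.range N, dist (c t) (c (t+1)))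
      + ∑ t ∈ Finset.range N, dist (c' t) (c' (t+1)) := by
  have hsplit : (∑ t ∈ Finset.range N, dist (c t) (c (t+1)))
      = (∑ t ∈ Finset.Ico 0 i, dist (c t) (c (t+1)))
        + (∑ t ∈ Finset.Ico i j, dist (c t) (c (t+1)))
        + (∑ t ∈ Finset.Ico j N, dist (c t) (c (t+1))) := by
    rw [Finset.range_eq_Ico, ← Finset.sum_Ico_consecutive _ (Nat.zero_le i) (hij.trans hj),
      ← Finset.sum_Ico_consecutive _ hij hj]
    ring
  have r1 : dist (c i) (c j) ≤ ∑ t ∈ Finset.Ico i j, dist (c t) (c (t+1)) :=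
    chain_dist c hij
  have r2 : dist (c i) (c j) ≤ (∑ t ∈ Finset.Ico 0 i, dist (c t) (c (t+1)))
      + (∑ t ∈ Finset.range N, dist (c' t) (c' (t+1)))
      + (∑ t ∈ Finset.Ico j N, dist (c t) (c (t+1))) := by
    have t1 : dist (c i) (c 0) ≤ ∑ t ∈ Finset.Ico 0 i, dist (c t) (c (t+1)) := by
      rw [dist_comm]; exact chain_dist c (Nat.zero_le i)
    have t2 : dist (c' 0) (c' N) ≤ ∑ t ∈ Finset.range N, dist (c' t) (c' (t+1)) := by
      rw [Finset.range_eq_Ico]; exact chain_dist c' (Nat.zero_le N)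
    have t3 : dist (c N) (c j) ≤ ∑ t ∈ Finset.Ico j N, dist (c t) (c (t+1)) := by
      rw [dist_comm]; exact chain_dist c hj
    calc dist (c i) (c j) ≤ dist (c i) (c 0) + dist (c 0) (c j) := dist_triangle _ _ _
      _ ≤ dist (c i) (c 0) + (dist (c 0) (c N) + dist (c N) (c j)) := by
          linarith [dist_triangle (c 0) (c N) (c j)]
      _ = dist (c i) (c 0) + (dist (c' 0) (c' N) + dist (c N) (c j)) := by rw [h0, hn]
      _ ≤ _ := by linarith
  linarith


def slp (c : ℕ → ℝ) (i : ℕ) : ℝ := c (i+1) - c i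

lemma sum_slp (c : ℕ → ℝ) {j k : ℕ} (h : j ≤ k) :
    ∑ i ∈ Finset.Ico j k, slp c i = c k - c j := by
  induction k, h using Nat.le_induction with
  | base => simp
  | succ k hk ih => rw [Finset.sum_Ico_succ_top hk, ih]; simp only [slp]; ring

lemma slope_mono {m : ℕ} {c : ℕ → ℝ} (hconv : ∀ i, i+2 ≤ m → 2*c (i+1) ≤ c i + c (i+2)) :
    ∀ i j, i ≤ j → j+1 ≤ m → slp c i ≤ slp c j := by
  intro i j hij hjm
  induction j, hij using Nat.le_induction with
  | base => exact le_refl _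
  | succ j hj ih =>
      have h1 := hconv j (by omega)
      have h2 : slp c j ≤ slp c (j+1) := by simp only [slp]; linarith
      exact (ih (by omega)).trans h2

lemma secant {m : ℕ} {c : ℕ → ℝ} (hconv : ∀ i, i+2 ≤ m → 2*c (i+1) ≤ c i + c (i+2))
    {j k : ℕ} (hj : j+1 ≤ m) (hk : k ≤ m) :
    c j + slp c j * ((k:ℝ) - j) ≤ c k := by
  rcases le_or_gt j k with hjk | hjk
  · have htel := sum_slp c hjk
    have hbound : ∑ i ∈ Finset.Ico j k, slp c j ≤ ∑ i ∈ Finset.Ico j k, slp c i := by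
      apply Finset.sum_le_sum
      intro i hi
      rw [Finset.mem_Ico] at hi
      exact slope_mono hconv j i hi.1 (by omega)
    rw [Finset.sum_const, Nat.card_Ico, nsmul_eq_mul] at hbound
    have hcast : ((k - j : ℕ) : ℝ) = (k:ℝ) - j := by
      push_cast [hjk]; ring
    rw [hcast] at hbound
    nlinarith [htel]
  · have hkj : k ≤ j := hjk.le
    have htel := sum_slp c hkj
    have hbound : ∑ i ∈ Finset.Ico k j, slp c i ≤ ∑ i ∈ Finset.Ico k j, slp c j := by
      apply Finset.sum_le_sum
      intro i hi
      rw [Finset.mem_Ico] at hi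
      exact slope_mono hconv i j (le_of_lt hi.2) hj
    rw [Finset.sum_const, Nat.card_Ico, nsmul_eq_mul] at hbound
    have hcast : ((j - k : ℕ) : ℝ) = (j:ℝ) - k := by
      push_cast [hkj]; ring
    rw [hcast] at hbound
    nlinarith [htel]



variable (n : ℕ) (a : ℕ → ℝ)

def Sp : Set E2 := {p : E2 | ∃ i ≤ n, p = pt i (a i)}

def K : Set E2 := convexHull ℝ (Sp n a)

lemma Sp_finite : (Sp n a).Finite := by
  have : Sp n a = (fun i : ℕ => pt i (a i)) '' (Set.Iic n) := by
    ext p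
    constructor
    · rintro ⟨i, hi, rfl⟩; exact ⟨i, hi, rfl⟩
    · rintro ⟨i, hi, rfl⟩; exact ⟨i, hi, rfl⟩
  rw [this]
  exact (Set.finite_Iic n).image _

lemma K_compact : IsCompact (K n a) := (Sp_finite n a).isCompact_convexHull ℝ

lemma K_convex : Convex ℝ (K n a) := convex_convexHull ℝ _

lemma K_closed : IsClosed (K n a) := (K_compact n a).isClosed

lemma mem_K_pt (i : ℕ) (hi : i ≤ n) : pt i (a i) ∈ K n a :=
  subset_convexHull ℝ _ ⟨i, hi, rfl⟩

lemma K_norm_bound : ∃ C : ℝ, ∀ z ∈ K n a, ‖z‖ ≤ C := by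
  rcases (isBounded_iff_forall_norm_le).1 (K_compact n a).isBounded with ⟨C, hC⟩
  exact ⟨C, hC⟩

lemma K_ge (u v t : ℝ) (h : ∀ j ≤ n, t ≤ u * j + v * a j) :
    ∀ z ∈ K n a, t ≤ u * z 0 + v * z 1 := by
  intro z hz
  have hsub : K n a ⊆ {w : E2 | t ≤ u * w 0 + v * w 1} := by
    apply convexHull_min
    · rintro p ⟨j, hj, rfl⟩
      simpa using h j hj
    · rintro p hp q hq α β hα hβ hαβ
      have h1 : ((α • p + β • q : E2)) 0 = α * p 0 + β * q 0 := rfl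
      have h2 : ((α • p + β • q : E2)) 1 = α * p 1 + β * q 1 := rfl
      simp only [Set.mem_setOf_eq] at hp hq ⊢
      rw [h1, h2]
      have ht : α*t + β*t = t := by rw [← add_mul, hαβ, one_mul]
      nlinarith [mul_le_mul_of_nonneg_left hp hα, mul_le_mul_of_nonneg_left hq hβ, ht]
  exact hsub hz

lemma K_gt (u v t : ℝ) (h : ∀ j ≤ n, t < u * j + v * a j) :
    ∀ z ∈ K n a, t < u * z 0 + v * z 1 := by
  intro z hz
  have hsub : K n a ⊆ {w : E2 | t < u * w 0 + v * w 1} := by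
    apply convexHull_min
    · rintro p ⟨j, hj, rfl⟩
      simpa using h j hj
    · rintro p hp q hq α β hα hβ hαβ
      have h1 : ((α • p + β • q : E2)) 0 = α * p 0 + β * q 0 := rfl
      have h2 : ((α • p + β • q : E2)) 1 = α * p 1 + β * q 1 := rfl
      simp only [Set.mem_setOf_eq] at hp hq ⊢
      rw [h1, h2]
      rcases eq_or_lt_of_le hα with rfl | hα'
      · have hβ1 : β = 1 := by linarith
        subst hβ1
        simpa using hq
      · have ht : α*t + β*t = t := by rw [← add_mul, hαβ, one_mul]
        nlinarith [mul_lt_mul_of_pos_left hp hα', mul_le_mul_of_nonneg_left hq.le hβ, ht]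
  exact hsub hz

lemma K_coord0_mem (z : E2) (hz : z ∈ K n a) : z 0 ∈ Set.Icc (0:ℝ) n := by
  constructor
  · have := K_ge n a 1 0 0 (fun j hj => by
      simpa using (Nat.cast_nonneg j : (0:ℝ) ≤ j)) z hz
    linarith
  · have := K_ge n a (-1) 0 (-(n:ℝ)) (fun j hj => by
      have : (j:ℝ) ≤ n := by exact_mod_cast hj
      linarith) z hz
    linarith

def fib (x : ℝ) : Set ℝ := {y : ℝ | pt x y ∈ K n a}

lemma pt_decomp (x y : ℝ) : pt x y = pt x 0 + y • pt 0 1 := by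
  ext i; fin_cases i <;> simp [pt]

lemma fib_closed (x : ℝ) : IsClosed (fib n a x) := by
  have hc : Continuous fun y : ℝ => pt x y := by
    have : (fun y : ℝ => pt x y) = fun y : ℝ => pt x 0 + y • pt 0 1 := by
      funext y; exact pt_decomp x y
    rw [this]
    exact continuous_const.add (continuous_id.smul continuous_const)
  exact (K_closed n a).preimage hc

lemma fib_nonempty (i : ℕ) (hi : i ≤ n) : (fib n a i).Nonempty :=
  ⟨a i, mem_K_pt n a i hi⟩

lemma fib_bddBelow (x : ℝ) : BddBelow (fib n a x) := by
  rcases K_norm_bound n a with ⟨C, hC⟩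
  refine ⟨-C, fun y hy => ?_⟩
  have h1 : |y| ≤ ‖pt x y‖ := by
    have := abs_sub_coord_le (pt x y) 0 1
    simpa [dist_zero_right] using this
  have := hC _ hy
  have := (abs_le.1 (h1.trans this)).1
  linarith

lemma fib_bddAbove (x : ℝ) : BddAbove (fib n a x) := by
  rcases K_norm_bound n a with ⟨C, hC⟩
  refine ⟨C, fun y hy => ?_⟩
  have h1 : |y| ≤ ‖pt x y‖ := by
    have := abs_sub_coord_le (pt x y) 0 1
    simpa [dist_zero_right] using this
  have := hC _ hy
  exact (abs_le.1 (h1.trans this)).2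

def fl (i : ℕ) : ℝ := sInf (fib n a i)
def gu (i : ℕ) : ℝ := sSup (fib n a i)

lemma fl_mem (i : ℕ) (hi : i ≤ n) : pt i (fl n a i) ∈ K n a :=
  (fib_closed n a i).csInf_mem (fib_nonempty n a i hi) (fib_bddBelow n a i)

lemma gu_mem (i : ℕ) (hi : i ≤ n) : pt i (gu n a i) ∈ K n a :=
  (fib_closed n a i).csSup_mem (fib_nonempty n a i hi) (fib_bddAbove n a i)

lemma fl_le_a (i : ℕ) (hi : i ≤ n) : fl n a i ≤ a i :=
  csInf_le (fib_bddBelow n a i) (mem_K_pt n a i hi)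

lemma a_le_gu (i : ℕ) (hi : i ≤ n) : a i ≤ gu n a i :=
  le_csSup (fib_bddAbove n a i) (mem_K_pt n a i hi)

lemma fl_le_of_mem {i : ℕ} {y : ℝ} (hy : pt i y ∈ K n a) : fl n a i ≤ y :=
  csInf_le (fib_bddBelow n a i) hy

lemma le_gu_of_mem {i : ℕ} {y : ℝ} (hy : pt i y ∈ K n a) : y ≤ gu n a i :=
  le_csSup (fib_bddAbove n a i) hy

lemma fl_convex : ∀ i, i+2 ≤ n → 2 * fl n a (i+1) ≤ fl n a i + fl n a (i+2) := by
  intro i hi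
  have hz := fl_mem n a i (by omega)
  have hw := fl_mem n a (i+2) (by omega)
  have hmid := K_convex n a hz hw (by norm_num : (0:ℝ) ≤ 1/2) (by norm_num : (0:ℝ) ≤ 1/2)
      (by norm_num : (1/2:ℝ) + 1/2 = 1)
  rw [combo_pt] at hmid
  have hcoord : ((1:ℝ)/2 * (i:ℝ) + 1/2 * ((i+2:ℕ):ℝ)) = ((i+1:ℕ):ℝ) := by
    push_cast; ring
  rw [hcoord] at hmid
  have := fl_le_of_mem n a hmid
  linarith

lemma gu_concave : ∀ i, i+2 ≤ n → gu n a i + gu n a (i+2) ≤ 2 * gu n a (i+1) := by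
  intro i hi
  have hz := gu_mem n a i (by omega)
  have hw := gu_mem n a (i+2) (by omega)
  have hmid := K_convex n a hz hw (by norm_num : (0:ℝ) ≤ 1/2) (by norm_num : (0:ℝ) ≤ 1/2)
      (by norm_num : (1/2:ℝ) + 1/2 = 1)
  rw [combo_pt] at hmid
  have hcoord : ((1:ℝ)/2 * (i:ℝ) + 1/2 * ((i+2:ℕ):ℝ)) = ((i+1:ℕ):ℝ) := by
    push_cast; ring
  rw [hcoord] at hmid
  have := le_gu_of_mem n a hmid
  linarith

lemma fl_zero : fl n a 0 = a 0 := by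
  refine le_antisymm (fl_le_a n a 0 (Nat.zero_le n)) ?_
  set c := ∑ j ∈ Finset.range (n+1), |a 0 - a j| with hc
  have hc0 : 0 ≤ c := Finset.sum_nonneg fun j _ => abs_nonneg _
  have hmem : ∀ j ≤ n, a 0 - a j ≤ c := by
    intro j hj
    exact (le_abs_self _).trans (Finset.single_le_sum
      (f := fun j => |a 0 - a j|) (fun t _ => abs_nonneg _)
      (Finset.mem_range.2 (by omega)))
  have h := K_ge n a c 1 (a 0) (fun j hj => by
    rcases Nat.eq_zero_or_pos j with rfl | hj1
    · simp
    · have h1 : (1:ℝ) ≤ j := by exact_mod_cast hj1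
      have := hmem j hj
      nlinarith)
  have := h _ (fl_mem n a 0 (Nat.zero_le n))
  simpa using this

lemma gu_zero : gu n a 0 = a 0 := by
  refine le_antisymm ?_ (a_le_gu n a 0 (Nat.zero_le n))
  set c := ∑ j ∈ Finset.range (n+1), |a j - a 0| with hc
  have hc0 : 0 ≤ c := Finset.sum_nonneg fun j _ => abs_nonneg _
  have hmem : ∀ j ≤ n, a j - a 0 ≤ c := by
    intro j hj
    exact (le_abs_self _).trans (Finset.single_le_sum
      (f := fun j => |a j - a 0|) (fun t _ => abs_nonneg _)
      (Finset.mem_range.2 (by omega)))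
  have h := K_ge n a c (-1) (-(a 0)) (fun j hj => by
    rcases Nat.eq_zero_or_pos j with rfl | hj1
    · simp
    · have h1 : (1:ℝ) ≤ j := by exact_mod_cast hj1
      have := hmem j hj
      nlinarith)
  have := h _ (gu_mem n a 0 (Nat.zero_le n))
  simp at this
  linarith

lemma fl_last : fl n a n = a n := by
  refine le_antisymm (fl_le_a n a n le_rfl) ?_
  set c := ∑ j ∈ Finset.range (n+1), |a n - a j| with hc
  have hc0 : 0 ≤ c := Finset.sum_nonneg fun j _ => abs_nonneg _
  have hmem : ∀ j ≤ n, a n - a j ≤ c := by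
    intro j hj
    exact (le_abs_self _).trans (Finset.single_le_sum
      (f := fun j => |a n - a j|) (fun t _ => abs_nonneg _)
      (Finset.mem_range.2 (by omega)))
  have h := K_ge n a (-c) 1 (a n - c * n) (fun j hj => by
    rcases eq_or_lt_of_le hj with rfl | hj1
    · linarith
    · have h1 : (j:ℝ) + 1 ≤ (n:ℝ) := by exact_mod_cast hj1
      have h2 := hmem j hj
      have h3 : c * 1 ≤ c * ((n:ℝ) - j) := mul_le_mul_of_nonneg_left (by linarith) hc0
      nlinarith)
  have hfin := h _ (fl_mem n a n le_rfl)
  simp at hfin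
  linarith

lemma gu_last : gu n a n = a n := by
  refine le_antisymm ?_ (a_le_gu n a n le_rfl)
  set c := ∑ j ∈ Finset.range (n+1), |a j - a n| with hc
  have hc0 : 0 ≤ c := Finset.sum_nonneg fun j _ => abs_nonneg _
  have hmem : ∀ j ≤ n, a j - a n ≤ c := by
    intro j hj
    exact (le_abs_self _).trans (Finset.single_le_sum
      (f := fun j => |a j - a n|) (fun t _ => abs_nonneg _)
      (Finset.mem_range.2 (by omega)))
  have h := K_ge n a (-c) (-1) (-(a n) - c * n) (fun j hj => by
    rcases eq_or_lt_of_le hj with rfl | hj1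
    · nlinarith [mul_nonneg hc0 (Nat.cast_nonneg j : (0:ℝ) ≤ j)]
    · have h1 : (j:ℝ) + 1 ≤ (n:ℝ) := by exact_mod_cast hj1
      have h2 := hmem j hj
      have h3 : c * 1 ≤ c * ((n:ℝ) - j) := mul_le_mul_of_nonneg_left (by linarith) hc0
      nlinarith)
  have hfin := h _ (gu_mem n a n le_rfl)
  simp at hfin
  linarith


variable (n : ℕ) (a : ℕ → ℝ)

def lineF (j : ℕ) (x : ℝ) : ℝ := fl n a j + (fl n a (j+1) - fl n a j) * (x - j)
def lineG (j : ℕ) (x : ℝ) : ℝ := gu n a j + (gu n a (j+1) - gu n a j) * (x - j)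

lemma neg_gu_convex : ∀ i, i+2 ≤ n → 2 * (-(gu n a (i+1))) ≤ -(gu n a i) + -(gu n a (i+2)) := by
  intro i hi
  have := gu_concave n a i hi
  linarith

lemma secant_fl {j k : ℕ} (hj : j + 1 ≤ n) (hk : k ≤ n) :
    fl n a j + (fl n a (j+1) - fl n a j) * ((k:ℝ) - j) ≤ fl n a k := by
  have := secant (m := n) (c := fl n a) (fl_convex n a) hj hk
  simpa [slp] using this

lemma secant_gu {j k : ℕ} (hj : j + 1 ≤ n) (hk : k ≤ n) :
    gu n a k ≤ gu n a j + (gu n a (j+1) - gu n a j) * ((k:ℝ) - j) := by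
  have := secant (m := n) (c := fun i => -(gu n a i)) (neg_gu_convex n a) hj hk
  simp only [slp] at this
  nlinarith [this]

lemma K_above_line (j : ℕ) (hj : j + 1 ≤ n) :
    ∀ z ∈ K n a, lineF n a j (z 0) ≤ z 1 := by
  intro z hz
  have h := K_ge n a (-(fl n a (j+1) - fl n a j)) 1
      (fl n a j - (fl n a (j+1) - fl n a j) * j) (fun k hk => by
    have hsec := secant_fl n a hj hk
    have hfa := fl_le_a n a k hk
    nlinarith [hsec, hfa]) z hz
  simp only [lineF]
  nlinarith [h]

lemma K_below_line (j : ℕ) (hj : j + 1 ≤ n) :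
    ∀ z ∈ K n a, z 1 ≤ lineG n a j (z 0) := by
  intro z hz
  have h := K_ge n a (gu n a (j+1) - gu n a j) (-1)
      (-(gu n a j) + (gu n a (j+1) - gu n a j) * j) (fun k hk => by
    have hsec := secant_gu n a hj hk
    have hfa := a_le_gu n a k hk
    nlinarith [hsec, hfa]) z hz
  simp only [lineG]
  nlinarith [h]

lemma lineF_le_piece {j k : ℕ} (hj : j + 1 ≤ n) (hk : k + 1 ≤ n) {x : ℝ}
    (hx1 : (k:ℝ) ≤ x) (hx2 : x ≤ (k:ℝ) + 1) :
    lineF n a j x ≤ lineF n a k x := by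
  have h1 : lineF n a j k ≤ fl n a k := by
    have := secant_fl n a hj (by omega : k ≤ n)
    simpa [lineF] using this
  have h2 : lineF n a j (k+1) ≤ fl n a (k+1) := by
    have := secant_fl n a hj (by omega : k + 1 ≤ n)
    have hc : ((k+1:ℕ):ℝ) = (k:ℝ)+1 := by push_cast; ring
    rw [hc] at this
    simpa [lineF] using this
  set t := x - (k:ℝ) with hts
  have ht0 : 0 ≤ t := by simp [hts]; linarith
  have ht1 : t ≤ 1 := by simp [hts]; linarith
  have e1 : lineF n a j x = (1-t) * lineF n a j k + t * lineF n a j ((k:ℝ)+1) := by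
    simp only [lineF, hts]; ring
  have e2 : lineF n a k x = (1-t) * fl n a k + t * fl n a (k+1) := by
    simp only [lineF, hts]; ring
  rw [e1, e2]
  have := mul_le_mul_of_nonneg_left h1 (by linarith : (0:ℝ) ≤ 1 - t)
  have := mul_le_mul_of_nonneg_left h2 ht0
  nlinarith [mul_le_mul_of_nonneg_left h1 (by linarith : (0:ℝ) ≤ 1 - t),
    mul_le_mul_of_nonneg_left h2 ht0]

lemma lineG_ge_piece {j k : ℕ} (hj : j + 1 ≤ n) (hk : k + 1 ≤ n) {x : ℝ}
    (hx1 : (k:ℝ) ≤ x) (hx2 : x ≤ (k:ℝ) + 1) :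
    lineG n a k x ≤ lineG n a j x := by
  have h1 : gu n a k ≤ lineG n a j k := by
    have := secant_gu n a hj (by omega : k ≤ n)
    simpa [lineG] using this
  have h2 : gu n a (k+1) ≤ lineG n a j (k+1) := by
    have := secant_gu n a hj (by omega : k + 1 ≤ n)
    have hc : ((k+1:ℕ):ℝ) = (k:ℝ)+1 := by push_cast; ring
    rw [hc] at this
    simpa [lineG] using this
  set t := x - (k:ℝ) with hts
  have ht0 : 0 ≤ t := by simp [hts]; linarith
  have ht1 : t ≤ 1 := by simp [hts]; linarith
  have e1 : lineG n a j x = (1-t) * lineG n a j k + t * lineG n a j ((k:ℝ)+1) := by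
    simp only [lineG, hts]; ring
  have e2 : lineG n a k x = (1-t) * gu n a k + t * gu n a (k+1) := by
    simp only [lineG, hts]; ring
  rw [e1, e2]
  nlinarith [mul_le_mul_of_nonneg_left h1 (by linarith : (0:ℝ) ≤ 1 - t),
    mul_le_mul_of_nonneg_left h2 ht0]

lemma cast_succ (j : ℕ) : ((j+1:ℕ):ℝ) = (j:ℝ)+1 := by push_cast; ring

lemma interp_mem_segment {j : ℕ} {x : ℝ} (hx1 : (j:ℝ) ≤ x) (hx2 : x ≤ (j:ℝ) + 1)
    (h : ℕ → ℝ) :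
    pt x (h j + (h (j+1) - h j) * (x - j)) ∈
      segment ℝ (pt j (h j)) (pt (j+1) (h (j+1))) := by
  rw [segment_eq_image']
  refine ⟨x - (j:ℝ), ⟨by linarith, by linarith⟩, ?_⟩
  show pt (j:ℝ) (h j) + (x - (j:ℝ)) • (pt ((j:ℝ)+1) (h (j+1)) - pt (j:ℝ) (h j)) = _
  rw [add_smul_pt, show (j:ℝ) + (x - (j:ℝ))*(((j:ℝ)+1) - (j:ℝ)) = x by ring,
    show h j + (x - (j:ℝ)) * (h (j+1) - h j) = h j + (h (j+1) - h j) * (x - (j:ℝ)) by ring]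

lemma segment_endpoints_K {j : ℕ} (hj : j + 1 ≤ n) :
    segment ℝ (pt j (fl n a j)) (pt (j+1) (fl n a (j+1))) ⊆ K n a := by
  apply (K_convex n a).segment_subset (fl_mem n a j (by omega))
  have := fl_mem n a (j+1) hj
  rwa [cast_succ] at this

lemma segment_endpoints_K' {j : ℕ} (hj : j + 1 ≤ n) :
    segment ℝ (pt j (gu n a j)) (pt (j+1) (gu n a (j+1))) ⊆ K n a := by
  apply (K_convex n a).segment_subset (gu_mem n a j (by omega))
  have := gu_mem n a (j+1) hj
  rwa [cast_succ] at this

lemma lineF_pt_mem {j : ℕ} (hj : j + 1 ≤ n) {x : ℝ} (hx1 : (j:ℝ) ≤ x) (hx2 : x ≤ (j:ℝ) + 1) :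
    pt x (lineF n a j x) ∈ K n a :=
  segment_endpoints_K n a hj (interp_mem_segment hx1 hx2 (fl n a))

lemma lineG_pt_mem {j : ℕ} (hj : j + 1 ≤ n) {x : ℝ} (hx1 : (j:ℝ) ≤ x) (hx2 : x ≤ (j:ℝ) + 1) :
    pt x (lineG n a j x) ∈ K n a :=
  segment_endpoints_K' n a hj (interp_mem_segment hx1 hx2 (gu n a))

lemma mem_K_interp {j : ℕ} (hj : j + 1 ≤ n) {x y : ℝ} (hx1 : (j:ℝ) ≤ x) (hx2 : x ≤ (j:ℝ) + 1)
    (h1 : lineF n a j x ≤ y) (h2 : y ≤ lineG n a j x) : pt x y ∈ K n a := by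
  have hA := lineF_pt_mem n a hj hx1 hx2
  have hB := lineG_pt_mem n a hj hx1 hx2
  rcases eq_or_lt_of_le (h1.trans h2) with heq | hlt
  · have hy : y = lineF n a j x := le_antisymm (by rw [heq]; exact h2) h1
    rw [hy]; exact hA
  · set τ := (y - lineF n a j x) / (lineG n a j x - lineF n a j x) with hτ
    have hden : 0 < lineG n a j x - lineF n a j x := by linarith
    have hτ0 : 0 ≤ τ := div_nonneg (by linarith) hden.le
    have hτ1 : τ ≤ 1 := by
      rw [hτ, div_le_one hden]; linarith
    have key : pt x y = pt x (lineF n a j x) + τ • (pt x (lineG n a j x) - pt x (lineF n a j x)) := by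
      have hyy : lineF n a j x + τ * (lineG n a j x - lineF n a j x) = y := by
        rw [hτ, div_mul_cancel₀ _ hden.ne']; ring
      rw [add_smul_pt, show x + τ*(x-x) = x by ring, hyy]
    rw [key]
    apply (K_convex n a).segment_subset hA hB
    rw [segment_eq_image']
    exact ⟨τ, ⟨hτ0, hτ1⟩, rfl⟩


variable (n : ℕ) (a : ℕ → ℝ)

def lowG : Set E2 :=
  ⋃ j ∈ Finset.range n, segment ℝ (pt j (fl n a j)) (pt (j+1) (fl n a (j+1)))

def hiG : Set E2 :=
  ⋃ j ∈ Finset.range n, segment ℝ (pt j (gu n a j)) (pt (j+1) (gu n a (j+1)))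

lemma seg_param {h : ℕ → ℝ} {j : ℕ} {z : E2}
    (hz : z ∈ segment ℝ (pt j (h j)) (pt (j+1) (h (j+1)))) :
    ∃ θ : ℝ, 0 ≤ θ ∧ θ ≤ 1 ∧ z = pt ((j:ℝ) + θ) (h j + (h (j+1) - h j) * θ) := by
  rw [segment_eq_image'] at hz
  obtain ⟨θ, ⟨h0, h1⟩, rfl⟩ := hz
  refine ⟨θ, h0, h1, ?_⟩
  show pt (j:ℝ) (h j) + θ • (pt ((j:ℝ)+1) (h (j+1)) - pt (j:ℝ) (h j)) = _
  rw [add_smul_pt, show (j:ℝ) + θ*(((j:ℝ)+1) - (j:ℝ)) = (j:ℝ) + θ by ring,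
    show h j + θ * (h (j+1) - h j) = h j + (h (j+1) - h j) * θ by ring]

lemma lowG_elem {z : E2} (hz : z ∈ lowG n a) :
    ∃ j, j < n ∧ ∃ x : ℝ, (j:ℝ) ≤ x ∧ x ≤ (j:ℝ)+1 ∧ z = pt x (lineF n a j x) := by
  simp only [lowG, Set.mem_iUnion, Finset.mem_range] at hz
  obtain ⟨j, hj, hseg⟩ := hz
  obtain ⟨θ, h0, h1, rfl⟩ := seg_param hseg
  refine ⟨j, hj, (j:ℝ)+θ, by linarith, by linarith, ?_⟩
  rw [show lineF n a j ((j:ℝ)+θ) = fl n a j + (fl n a (j+1) - fl n a j) * θ by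
    simp only [lineF]; ring]

lemma hiG_elem {z : E2} (hz : z ∈ hiG n a) :
    ∃ j, j < n ∧ ∃ x : ℝ, (j:ℝ) ≤ x ∧ x ≤ (j:ℝ)+1 ∧ z = pt x (lineG n a j x) := by
  simp only [hiG, Set.mem_iUnion, Finset.mem_range] at hz
  obtain ⟨j, hj, hseg⟩ := hz
  obtain ⟨θ, h0, h1, rfl⟩ := seg_param hseg
  refine ⟨j, hj, (j:ℝ)+θ, by linarith, by linarith, ?_⟩
  rw [show lineG n a j ((j:ℝ)+θ) = gu n a j + (gu n a (j+1) - gu n a j) * θ by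
    simp only [lineG]; ring]

lemma lowG_subset_frontier : lowG n a ⊆ frontier (K n a) := by
  intro z hz
  obtain ⟨j, hj, x, hx1, hx2, rfl⟩ := lowG_elem n a hz
  rw [(K_closed n a).frontier_eq]
  refine ⟨lineF_pt_mem n a hj hx1 hx2, ?_⟩
  have hcl : pt x (lineF n a j x) ∈ closure (K n a)ᶜ := by
    rw [Metric.mem_closure_iff]
    intro ε hε
    refine ⟨pt x (lineF n a j x - ε/2), ?_, ?_⟩
    · intro hmem
      have := K_above_line n a j hj _ hmem
      simp only [pt_app0, pt_app1] at this
      linarith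
    · rw [dist_pt]
      rw [show (x - x)^2 + (lineF n a j x - (lineF n a j x - ε/2))^2 = (ε/2)^2 by ring]
      rw [Real.sqrt_sq (by positivity)]
      linarith
  rw [closure_compl] at hcl
  exact hcl

lemma hiG_subset_frontier : hiG n a ⊆ frontier (K n a) := by
  intro z hz
  obtain ⟨j, hj, x, hx1, hx2, rfl⟩ := hiG_elem n a hz
  rw [(K_closed n a).frontier_eq]
  refine ⟨lineG_pt_mem n a hj hx1 hx2, ?_⟩
  have hcl : pt x (lineG n a j x) ∈ closure (K n a)ᶜ := by
    rw [Metric.mem_closure_iff]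
    intro ε hε
    refine ⟨pt x (lineG n a j x + ε/2), ?_, ?_⟩
    · intro hmem
      have := K_below_line n a j hj _ hmem
      simp only [pt_app0, pt_app1] at this
      linarith
    · rw [dist_pt]
      rw [show (x - x)^2 + (lineG n a j x - (lineG n a j x + ε/2))^2 = (ε/2)^2 by ring]
      rw [Real.sqrt_sq (by positivity)]
      linarith
  rw [closure_compl] at hcl
  exact hcl


variable (n : ℕ) (a : ℕ → ℝ)

lemma mem_interior_K {x y : ℝ} (hx0 : 0 < x) (hxn : x < n)
    (hl : ∀ j, j + 1 ≤ n → lineF n a j x < y)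
    (hg : ∀ j, j + 1 ≤ n → y < lineG n a j x) :
    pt x y ∈ interior (K n a) := by
  have hn : 1 ≤ n := by
    rcases Nat.eq_zero_or_pos n with rfl | h
    · exfalso; simp only [Nat.cast_zero] at hxn; linarith
    · exact h
  have hne : (Finset.range n).Nonempty := ⟨0, Finset.mem_range.2 (by omega)⟩
  set F : ℕ → ℝ := fun j => min ((y - lineF n a j x)/(1+|fl n a (j+1) - fl n a j|))
      ((lineG n a j x - y)/(1+|gu n a (j+1) - gu n a j|)) with hF
  set ε := min (min x ((n:ℝ) - x)) ((Finset.range n).inf' hne F) with hεdef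
  have hFpos : ∀ j ∈ Finset.range n, 0 < F j := by
    intro j hj
    rw [Finset.mem_range] at hj
    have h1 := hl j (by omega)
    have h2 := hg j (by omega)
    exact lt_min (div_pos (by linarith) (by positivity)) (div_pos (by linarith) (by positivity))
  have hεpos : 0 < ε := by
    apply lt_min (lt_min hx0 (by linarith))
    exact (Finset.lt_inf'_iff hne).2 hFpos
  have hεx : ε ≤ x := (min_le_left _ _).trans (min_le_left _ _)
  have hεnx : ε ≤ (n:ℝ) - x := (min_le_left _ _).trans (min_le_right _ _)
  have hball : Metric.ball (pt x y) ε ⊆ K n a := by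
    intro w hw
    have hd : dist w (pt x y) < ε := Metric.mem_ball.1 hw
    have h0 : |w 0 - x| < ε :=
      lt_of_le_of_lt (by simpa using abs_sub_coord_le w (pt x y) 0) hd
    have h1 : |w 1 - y| < ε :=
      lt_of_le_of_lt (by simpa using abs_sub_coord_le w (pt x y) 1) hd
    have h0' := abs_lt.1 h0
    have h1' := abs_lt.1 h1
    have hw0a : 0 ≤ w 0 := by linarith [h0'.1]
    have hw0b : w 0 < n := by linarith [h0'.2]
    set k := Nat.floor (w 0) with hk
    have hkn : k < n := by
      have := (Nat.floor_lt hw0a).2 hw0b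
      exact_mod_cast this
    have hk1 : (k:ℝ) ≤ w 0 := Nat.floor_le hw0a
    have hk2 : w 0 ≤ (k:ℝ) + 1 := (Nat.lt_floor_add_one (w 0)).le
    have hεF : ε ≤ F k := (min_le_right _ _).trans (Finset.inf'_le F (Finset.mem_range.2 hkn))
    have hlow : lineF n a k (w 0) ≤ w 1 := by
      have e : lineF n a k (w 0) = lineF n a k x + (fl n a (k+1) - fl n a k) * (w 0 - x) := by
        simp only [lineF]; ring
      have b1 : (fl n a (k+1) - fl n a k) * (w 0 - x) ≤ |fl n a (k+1) - fl n a k| * ε := by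
        calc (fl n a (k+1) - fl n a k) * (w 0 - x)
            ≤ |(fl n a (k+1) - fl n a k) * (w 0 - x)| := le_abs_self _
          _ = |fl n a (k+1) - fl n a k| * |w 0 - x| := abs_mul _ _
          _ ≤ |fl n a (k+1) - fl n a k| * ε :=
              mul_le_mul_of_nonneg_left h0.le (abs_nonneg _)
      have b2 : ε * (1 + |fl n a (k+1) - fl n a k|) ≤ y - lineF n a k x := by
        have h3 : ε ≤ (y - lineF n a k x)/(1+|fl n a (k+1) - fl n a k|) :=
          hεF.trans (min_le_left _ _)
        rwa [le_div_iff₀ (by positivity)] at h3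
      rw [e]
      nlinarith [b1, b2, h1'.1]
    have hhigh : w 1 ≤ lineG n a k (w 0) := by
      have e : lineG n a k (w 0) = lineG n a k x + (gu n a (k+1) - gu n a k) * (w 0 - x) := by
        simp only [lineG]; ring
      have b1 : -(|gu n a (k+1) - gu n a k| * ε) ≤ (gu n a (k+1) - gu n a k) * (w 0 - x) := by
        have : (gu n a (k+1) - gu n a k) * (w 0 - x) ≥ -|(gu n a (k+1) - gu n a k) * (w 0 - x)| :=
          neg_abs_le _
        have h4 : |(gu n a (k+1) - gu n a k) * (w 0 - x)| ≤ |gu n a (k+1) - gu n a k| * ε := by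
          rw [abs_mul]
          exact mul_le_mul_of_nonneg_left h0.le (abs_nonneg _)
        linarith
      have b2 : ε * (1 + |gu n a (k+1) - gu n a k|) ≤ lineG n a k x - y := by
        have h3 : ε ≤ (lineG n a k x - y)/(1+|gu n a (k+1) - gu n a k|) :=
          hεF.trans (min_le_right _ _)
        rwa [le_div_iff₀ (by positivity)] at h3
      rw [e]
      nlinarith [b1, b2, h1'.2]
    have hmem := mem_K_interp n a (show k+1 ≤ n by omega) hk1 hk2 hlow hhigh
    rwa [← eq_pt w] at hmem
  exact interior_maximal hball Metric.isOpen_ball (Metric.mem_ball_self hεpos)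

lemma frontier_subset_graphs (hn : 1 ≤ n) : frontier (K n a) ⊆ lowG n a ∪ hiG n a := by
  intro z hz
  have hzK : z ∈ K n a := by
    have := frontier_subset_closure hz
    rwa [(K_closed n a).closure_eq] at this
  obtain ⟨hx0, hxn⟩ := K_coord0_mem n a z hzK
  obtain ⟨k, hkn, hk1, hk2⟩ : ∃ k, k < n ∧ (k:ℝ) ≤ z 0 ∧ z 0 ≤ (k:ℝ)+1 := by
    rcases lt_or_ge (Nat.floor (z 0)) n with hfl | hfl
    · exact ⟨Nat.floor (z 0), hfl, Nat.floor_le hx0, (Nat.lt_floor_add_one _).le⟩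
    · refine ⟨n-1, by omega, ?_, ?_⟩ <;>
      · have h1 : (n:ℝ) ≤ Nat.floor (z 0) := by exact_mod_cast hfl
        have h2 := Nat.floor_le hx0
        have hc : ((n-1:ℕ):ℝ) = (n:ℝ) - 1 := by
          have h3 : (1:ℕ) ≤ n := hn
          push_cast [h3]
          ring
        rw [hc]
        linarith
  by_cases hF : z 1 = lineF n a k (z 0)
  · left
    simp only [lowG, Set.mem_iUnion, Finset.mem_range]
    refine ⟨k, hkn, ?_⟩
    have hzz : z = pt (z 0) (lineF n a k (z 0)) := by rw [← hF]; exact eq_pt z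
    rw [hzz]
    exact interp_mem_segment hk1 hk2 (fl n a)
  · by_cases hG : z 1 = lineG n a k (z 0)
    · right
      simp only [hiG, Set.mem_iUnion, Finset.mem_range]
      refine ⟨k, hkn, ?_⟩
      have hzz : z = pt (z 0) (lineG n a k (z 0)) := by rw [← hG]; exact eq_pt z
      rw [hzz]
      exact interp_mem_segment hk1 hk2 (gu n a)
    · exfalso
      have hl2 : lineF n a k (z 0) < z 1 :=
        lt_of_le_of_ne (K_above_line n a k hkn z hzK) (Ne.symm hF)
      have hg2 : z 1 < lineG n a k (z 0) :=
        lt_of_le_of_ne (K_below_line n a k hkn z hzK) hG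
      have hlall : ∀ j, j + 1 ≤ n → lineF n a j (z 0) < z 1 :=
        fun j hj => (lineF_le_piece n a hj hkn hk1 hk2).trans_lt hl2
      have hgall : ∀ j, j + 1 ≤ n → z 1 < lineG n a j (z 0) :=
        fun j hj => hg2.trans_le (lineG_ge_piece n a hj hkn hk1 hk2)
      have hx0' : 0 < z 0 := by
        rcases eq_or_lt_of_le hx0 with heq | h
        · exfalso
          have hkr : (k:ℝ) = 0 := le_antisymm (heq ▸ hk1) (Nat.cast_nonneg k)
          have e1 : lineF n a k (z 0) = a 0 := by
            have hk0 : k = 0 := by exact_mod_cast hkr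
            rw [hk0, ← heq]
            simp [lineF, fl_zero]
          have e2 : lineG n a k (z 0) = a 0 := by
            have hk0 : k = 0 := by exact_mod_cast hkr
            rw [hk0, ← heq]
            simp [lineG, gu_zero]
          rw [e1] at hl2; rw [e2] at hg2
          linarith
        · exact h
      have hxn' : z 0 < n := by
        rcases eq_or_lt_of_le hxn with heq | h
        · exfalso
          have hksucc : k + 1 = n := by
            have h4 : (n:ℝ) ≤ (k:ℝ) + 1 := by rw [← heq]; exact hk2
            have h5 : n ≤ k + 1 := by exact_mod_cast h4
            omega
          have e1 : lineF n a k (z 0) = a n := by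
            rw [heq]
            have : lineF n a k n = fl n a (k+1) := by
              simp only [lineF]
              rw [← hksucc]
              push_cast
              ring
            rw [this, hksucc, fl_last]
          have e2 : lineG n a k (z 0) = a n := by
            rw [heq]
            have : lineG n a k n = gu n a (k+1) := by
              simp only [lineG]
              rw [← hksucc]
              push_cast
              ring
            rw [this, hksucc, gu_last]
          rw [e1] at hl2; rw [e2] at hg2
          linarith
        · exact h
      have hint := mem_interior_K n a hx0' hxn' hlall hgall
      rw [← eq_pt z] at hint
      have hfr := (K_closed n a).frontier_eq ▸ hz
      exact hfr.2 hint

lemma frontier_K_eq (hn : 1 ≤ n) : frontier (K n a) = lowG n a ∪ hiG n a :=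
  le_antisymm (frontier_subset_graphs n a hn)
    (Set.union_subset (lowG_subset_frontier n a) (hiG_subset_frontier n a))


variable (n : ℕ) (a : ℕ → ℝ)

lemma segment_isCompact (u v : E2) : IsCompact (segment ℝ u v) := by
  rw [segment_eq_image']
  exact isCompact_Icc.image (continuous_const.add (continuous_id.smul continuous_const))

lemma seg_inter_sub (h : ℕ → ℝ) {i j : ℕ} (hij : i < j) :
    segment ℝ (pt i (h i)) (pt (i+1) (h (i+1))) ∩
      segment ℝ (pt j (h j)) (pt (j+1) (h (j+1))) ⊆ {pt (j:ℝ) (h j)} := by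
  rintro z ⟨hzi, hzj⟩
  obtain ⟨θ, h0, h1, he⟩ := seg_param hzi
  obtain ⟨θ', h0', h1', he'⟩ := seg_param hzj
  have hco : (i:ℝ) + θ = (j:ℝ) + θ' := by
    have e1 : z 0 = (i:ℝ) + θ := by rw [he]; rfl
    have e2 : z 0 = (j:ℝ) + θ' := by rw [he']; rfl
    linarith [e1 ▸ e2]
  have hij' : (i:ℝ) + 1 ≤ (j:ℝ) := by exact_mod_cast hij
  have hθ : θ = 1 := by linarith
  have hθ' : θ' = 0 := by linarith
  have hjj : (j:ℝ) = (i:ℝ) + 1 := by linarith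
  rw [he', hθ']
  simp [Set.mem_singleton_iff]
lemma meas_graph (h : ℕ → ℝ) :
    μH[1] (⋃ j ∈ Finset.range n, segment ℝ (pt j (h j)) (pt (j+1) (h (j+1))))
      = ∑ j ∈ Finset.range n,
          ENNReal.ofReal (dist (pt (j:ℝ) (h j)) (pt ((j:ℝ)+1) (h (j+1)))) := by
  rw [measure_biUnion_finset₀]
  · exact Finset.sum_congr rfl fun j _ => hausdorff_segment _ _
  · intro i hi j hj hij
    rcases hij.lt_or_gt with hlt | hlt
    · exact measure_mono_null (seg_inter_sub h hlt) (hausdorff_singleton _)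
    · exact MeasureTheory.AEDisjoint.symm
        (measure_mono_null (seg_inter_sub h hlt) (hausdorff_singleton _))
  · intro b _
    exact ((segment_isCompact _ _).isClosed.measurableSet).nullMeasurableSet

lemma fl_le_gu (i : ℕ) (hi : i ≤ n) : fl n a i ≤ gu n a i :=
  (fl_le_a n a i hi).trans (a_le_gu n a i hi)

lemma inter_graphs_sub
    (hNC : ∀ j, j + 1 ≤ n → ¬(fl n a j = gu n a j ∧ fl n a (j+1) = gu n a (j+1))) :
    lowG n a ∩ hiG n a ⊆ ⋃ m ∈ Finset.range (n+1), ({pt (m:ℝ) (fl n a m)} : Set E2) := by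
  rintro z ⟨hzl, hzh⟩
  obtain ⟨j, hj, x, hx1, hx2, rfl⟩ := lowG_elem n a hzl
  obtain ⟨k, hk, x', hx1', hx2', he⟩ := hiG_elem n a hzh
  have hxx : x' = x := by
    have := congrArg (fun w : E2 => w 0) he
    simpa using this.symm
  rw [hxx] at hx1' hx2' he
  have hy : lineF n a j x = lineG n a k x := by
    have := congrArg (fun w : E2 => w 1) he
    simpa using this
  have eFj : lineF n a j (j:ℝ) = fl n a j := by simp [lineF]
  have eFj1 : lineF n a j ((j:ℝ)+1) = fl n a (j+1) := by simp only [lineF]; ring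
  have hmain : ∃ m, m ≤ n ∧ x = (m:ℝ) ∧ fl n a m = gu n a m := by
    have eGk : lineG n a k (k:ℝ) = gu n a k := by simp [lineG]
    have eGk1 : lineG n a k ((k:ℝ)+1) = gu n a (k+1) := by simp only [lineG]; ring
    rcases eq_or_lt_of_le hx1 with hxj | hxj
    · -- x = j
      rcases eq_or_lt_of_le hx1' with hxk | hxk
      · -- x = k, so j = k
        have hjk : j = k := by exact_mod_cast hxj.trans hxk.symm
        subst hjk
        rw [← hxj, eFj, eGk] at hy
        exact ⟨j, by omega, hxj.symm, hy⟩
      · rcases eq_or_lt_of_le hx2' with hxk1 | hxk1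
        · -- x = k+1, so j = k+1
          have h6 : ((j:ℕ):ℝ) = ((k+1:ℕ):ℝ) := by push_cast; rw [hxj]; exact hxk1
          have hjk : j = k + 1 := by exact_mod_cast h6
          rw [← hxj, eFj] at hy
          rw [show ((j:ℕ):ℝ) = (k:ℝ)+1 by push_cast at h6 ⊢; exact h6] at hy
          rw [eGk1, ← hjk] at hy
          exact ⟨j, by omega, hxj.symm, hy⟩
        · exfalso
          have c1 : (k:ℝ) < (j:ℝ) := by rw [hxj]; exact hxk
          have c2 : ((j:ℕ):ℝ) < ((k+1:ℕ):ℝ) := by push_cast; rw [hxj]; exact hxk1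
          have d1 : k < j := by exact_mod_cast c1
          have d2 : j < k + 1 := by exact_mod_cast c2
          omega
    · rcases eq_or_lt_of_le hx2 with hxj1 | hxj1
      · -- x = j+1
        rcases eq_or_lt_of_le hx1' with hxk | hxk
        · -- x = k, so k = j+1
          have hjk : k = j + 1 := by
            have h6 : ((k:ℕ):ℝ) = ((j+1:ℕ):ℝ) := by push_cast; rw [hxk]; exact hxj1
            exact_mod_cast h6
          rw [hxj1, eFj1] at hy
          rw [show lineG n a k ((j:ℝ)+1) = lineG n a k (k:ℝ) by
            rw [hjk]; push_cast; ring_nf] at hy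
          rw [eGk, hjk] at hy
          refine ⟨j+1, by omega, by rw [hxj1]; push_cast; ring, hy⟩
        · rcases eq_or_lt_of_le hx2' with hxk1 | hxk1
          · -- x = k+1, so j = k
            have hjk : j = k := by
              have h6 : ((j:ℕ):ℝ) = ((k:ℕ):ℝ) := by
                have : (j:ℝ) + 1 = (k:ℝ) + 1 := by rw [← hxj1, hxk1]
                push_cast
                linarith
              exact_mod_cast h6
            subst hjk
            rw [hxj1, eFj1] at hy
            rw [show lineG n a j ((j:ℝ)+1) = gu n a (j+1) from eGk1] at hy
            refine ⟨j+1, by omega, by rw [hxj1]; push_cast; ring, hy⟩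
          · exfalso
            have c1 : ((k:ℕ):ℝ) < ((j+1:ℕ):ℝ) := by push_cast; rw [← hxj1]; exact hxk
            have c2 : ((j+1:ℕ):ℝ) < ((k+1:ℕ):ℝ) := by push_cast; rw [← hxj1]; exact hxk1
            have d1 : k < j + 1 := by exact_mod_cast c1
            have d2 : j + 1 < k + 1 := by exact_mod_cast c2
            omega
      · -- j < x < j+1 : strict interior
        exfalso
        have hjk : j = k := by
          rcases lt_trichotomy j k with hl | he' | hl
          · have h6 : ((j+1:ℕ):ℝ) ≤ ((k:ℕ):ℝ) := by exact_mod_cast hl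
            push_cast at h6
            linarith
          · exact he'
          · have h6 : ((k+1:ℕ):ℝ) ≤ ((j:ℕ):ℝ) := by exact_mod_cast hl
            push_cast at h6
            linarith
        subst hjk
        set t := x - (j:ℝ) with ht
        have ht0 : 0 < t := by simp only [ht]; linarith
        have ht1 : t < 1 := by simp only [ht]; linarith
        have hexp : (1-t) * (gu n a j - fl n a j) + t * (gu n a (j+1) - fl n a (j+1)) = 0 := by
          simp only [lineF, lineG, ht] at hy ⊢
          nlinarith [hy]
        have hp : 0 ≤ gu n a j - fl n a j := by linarith [fl_le_gu n a j (by omega)]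
        have hq : 0 ≤ gu n a (j+1) - fl n a (j+1) := by linarith [fl_le_gu n a (j+1) (by omega)]
        have hp0 : gu n a j - fl n a j = 0 := by nlinarith
        have hq0 : gu n a (j+1) - fl n a (j+1) = 0 := by nlinarith
        exact hNC j hj ⟨by linarith, by linarith⟩
  obtain ⟨m, hm, hxm, hfg⟩ := hmain
  simp only [Set.mem_iUnion, Finset.mem_range, Set.mem_singleton_iff]
  refine ⟨m, by omega, ?_⟩
  subst hxm
  have hmjj : m = j ∨ m = j + 1 := by
    have d1 : j ≤ m := by exact_mod_cast hx1
    have d2 : ((m:ℕ):ℝ) ≤ ((j+1:ℕ):ℝ) := by push_cast; linarith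
    have d2' : m ≤ j + 1 := by exact_mod_cast d2
    omega
  rcases hmjj with rfl | rfl
  · rw [eFj]
  · rw [show ((j+1:ℕ):ℝ) = (j:ℝ)+1 from cast_succ j, eFj1]

lemma meas_frontier (hn : 1 ≤ n)
    (hNC : ∀ j, j + 1 ≤ n → ¬(fl n a j = gu n a j ∧ fl n a (j+1) = gu n a (j+1))) :
    μH[1] (frontier (K n a)) =
      ENNReal.ofReal (∑ j ∈ Finset.range n,
          dist (pt (j:ℝ) (fl n a j)) (pt ((j:ℝ)+1) (fl n a (j+1))))
      + ENNReal.ofReal (∑ j ∈ Finset.range n,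
          dist (pt (j:ℝ) (gu n a j)) (pt ((j:ℝ)+1) (gu n a (j+1)))) := by
  rw [frontier_K_eq n a hn]
  have hmeas : NullMeasurableSet (hiG n a) (μH[1]) := by
    apply MeasurableSet.nullMeasurableSet
    apply Finset.measurableSet_biUnion
    intro b _
    exact (segment_isCompact _ _).isClosed.measurableSet
  have hdisT : μH[1] (lowG n a ∩ hiG n a) = 0 := by
    apply measure_mono_null (inter_graphs_sub n a hNC)
    apply le_antisymm _ zero_le
    calc μH[1] (⋃ m ∈ Finset.range (n+1), ({pt (m:ℝ) (fl n a m)} : Set E2))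
        ≤ ∑ m ∈ Finset.range (n+1), μH[1] ({pt (m:ℝ) (fl n a m)} : Set E2) :=
          measure_biUnion_finset_le _ _
      _ = 0 := by
          rw [Finset.sum_eq_zero]
          intro m _
          exact hausdorff_singleton _
  rw [measure_union₀ hmeas hdisT]
  unfold lowG hiG
  rw [meas_graph, meas_graph]
  rw [ENNReal.ofReal_sum_of_nonneg (fun i _ => dist_nonneg),
    ENNReal.ofReal_sum_of_nonneg (fun i _ => dist_nonneg)]


variable (n : ℕ) (a : ℕ → ℝ)

lemma smul_pt (r x y : ℝ) : r • pt x y = pt (r*x) (r*y) := by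
  ext i; fin_cases i <;> simp [pt]

lemma add_pt (x y x' y' : ℝ) : pt x y + pt x' y' = pt (x+x') (y+y') := by
  ext i; fin_cases i <;> simp [pt]

lemma contact_fl (i : ℕ) (h2 : i + 2 ≤ n) (hne : fl n a (i+1) ≠ a (i+1)) :
    slp (fl n a) (i+1) = slp (fl n a) i := by
  by_contra hslope
  have hmono : slp (fl n a) i ≤ slp (fl n a) (i+1) :=
    slope_mono (fl_convex n a) i (i+1) (by omega) (by omega)
  have hlt : slp (fl n a) i < slp (fl n a) (i+1) := lt_of_le_of_ne hmono (fun h => hslope h.symm)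
  set s1 := slp (fl n a) i with hs1
  set s2 := slp (fl n a) (i+1) with hs2
  set c := (s1+s2)/2 with hcdef
  have hc1 : s1 < c := by rw [hcdef]; linarith
  have hc2 : c < s2 := by rw [hcdef]; linarith
  have hflt : fl n a (i+1) < a (i+1) :=
    lt_of_le_of_ne (fl_le_a n a (i+1) (by omega)) hne
  have hstrict : ∀ j ≤ n, fl n a (i+1) - c * ((i+1:ℕ):ℝ) < -c * j + 1 * a j := by
    intro j hj
    have hfla := fl_le_a n a j hj
    rcases lt_trichotomy j (i+1) with hlt' | heq | hgt
    · -- j ≤ i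
      have hsec := secant (m := n) (c := fl n a) (fl_convex n a) (j := i) (k := j)
        (by omega) hj
      -- fl i + s1 * (j - i) ≤ fl j ; fl (i+1) = fl i + s1
      have hfl1 : fl n a (i+1) = fl n a i + s1 := by rw [hs1]; simp [slp]
      have hneg : (j:ℝ) - ((i+1:ℕ):ℝ) < 0 := by
        have : ((j:ℕ):ℝ) < ((i+1:ℕ):ℝ) := by exact_mod_cast hlt'
        linarith
      have hkey : c * ((j:ℝ) - ((i+1:ℕ):ℝ)) < s1 * ((j:ℝ) - ((i+1:ℕ):ℝ)) :=
        mul_lt_mul_of_neg_right hc1 hneg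
      have hcast : ((i+1:ℕ):ℝ) = (i:ℝ) + 1 := by push_cast; ring
      rw [← hs1] at hsec
      rw [hcast] at hkey ⊢
      nlinarith [hsec, hkey, hfl1, hfla]
    · subst heq
      nlinarith [hflt]
    · -- j ≥ i+2
      have hsec := secant (m := n) (c := fl n a) (fl_convex n a) (j := i+1) (k := j)
        (by omega) hj
      have hpos : (0:ℝ) < (j:ℝ) - ((i+1:ℕ):ℝ) := by
        have : ((i+1:ℕ):ℝ) < ((j:ℕ):ℝ) := by exact_mod_cast hgt
        linarith
      have hkey : c * ((j:ℝ) - ((i+1:ℕ):ℝ)) < s2 * ((j:ℝ) - ((i+1:ℕ):ℝ)) :=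
        mul_lt_mul_of_pos_right hc2 hpos
      rw [← hs2] at hsec
      nlinarith [hsec, hkey, hfla]
  have h := K_gt n a (-c) 1 (fl n a (i+1) - c * ((i+1:ℕ):ℝ)) hstrict _
    (fl_mem n a (i+1) (by omega))
  simp only [pt_app0, pt_app1] at h
  linarith

lemma contact_gu (i : ℕ) (h2 : i + 2 ≤ n) (hne : gu n a (i+1) ≠ a (i+1)) :
    slp (gu n a) (i+1) = slp (gu n a) i := by
  by_contra hslope
  have hmono : slp (fun t => -(gu n a t)) i ≤ slp (fun t => -(gu n a t)) (i+1) :=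
    slope_mono (neg_gu_convex n a) i (i+1) (by omega) (by omega)
  have hmono' : slp (gu n a) (i+1) ≤ slp (gu n a) i := by
    simp only [slp] at hmono ⊢; linarith
  have hlt : slp (gu n a) (i+1) < slp (gu n a) i := lt_of_le_of_ne hmono' hslope
  set s1 := slp (gu n a) i with hs1
  set s2 := slp (gu n a) (i+1) with hs2
  set c := (s1+s2)/2 with hcdef
  have hc1 : c < s1 := by rw [hcdef]; linarith
  have hc2 : s2 < c := by rw [hcdef]; linarith
  have hgut : a (i+1) < gu n a (i+1) :=
    lt_of_le_of_ne (a_le_gu n a (i+1) (by omega)) (fun h => hne h.symm)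
  have hstrict : ∀ j ≤ n, c * ((i+1:ℕ):ℝ) - gu n a (i+1) < c * j + (-1) * a j := by
    intro j hj
    have hgua := a_le_gu n a j hj
    rcases lt_trichotomy j (i+1) with hlt' | heq | hgt
    · have hsec := secant (m := n) (c := fun t => -(gu n a t)) (neg_gu_convex n a)
        (j := i) (k := j) (by omega) hj
      have hgu1 : gu n a (i+1) = gu n a i + s1 := by rw [hs1]; simp [slp]
      have hneg : (j:ℝ) - ((i+1:ℕ):ℝ) < 0 := by
        have : ((j:ℕ):ℝ) < ((i+1:ℕ):ℝ) := by exact_mod_cast hlt'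
        linarith
      have hkey : s1 * ((j:ℝ) - ((i+1:ℕ):ℝ)) < c * ((j:ℝ) - ((i+1:ℕ):ℝ)) :=
        mul_lt_mul_of_neg_right hc1 hneg
      have hcast : ((i+1:ℕ):ℝ) = (i:ℝ) + 1 := by push_cast; ring
      have hsec' : -(gu n a i) + (-(gu n a (i+1)) - -(gu n a i)) * ((j:ℝ) - i) ≤ -(gu n a j) := by
        simpa [slp] using hsec
      have hs1' : -(gu n a (i+1)) - -(gu n a i) = -s1 := by rw [hs1]; simp [slp]; ring
      rw [hs1'] at hsec'
      rw [hcast] at hkey ⊢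
      nlinarith [hsec', hkey, hgu1, hgua]
    · subst heq
      nlinarith [hgut]
    · have hsec := secant (m := n) (c := fun t => -(gu n a t)) (neg_gu_convex n a)
        (j := i+1) (k := j) (by omega) hj
      have hpos : (0:ℝ) < (j:ℝ) - ((i+1:ℕ):ℝ) := by
        have : ((i+1:ℕ):ℝ) < ((j:ℕ):ℝ) := by exact_mod_cast hgt
        linarith
      have hkey : s2 * ((j:ℝ) - ((i+1:ℕ):ℝ)) < c * ((j:ℝ) - ((i+1:ℕ):ℝ)) :=
        mul_lt_mul_of_pos_right hc2 hpos
      have hsec' : -(gu n a (i+1)) + (-(gu n a (i+2)) - -(gu n a (i+1))) * ((j:ℝ) - ((i+1:ℕ):ℝ)) ≤ -(gu n a j) := by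
        simpa [slp] using hsec
      have hs2' : -(gu n a (i+2)) - -(gu n a (i+1)) = -s2 := by rw [hs2]; simp [slp]; ring
      rw [hs2'] at hsec'
      nlinarith [hsec', hkey, hgua]
  have h := K_gt n a c (-1) (c * ((i+1:ℕ):ℝ) - gu n a (i+1)) hstrict _
    (gu_mem n a (i+1) (by omega))
  simp only [pt_app0, pt_app1] at h
  linarith

lemma dist_pt_nat (h : ℕ → ℝ) (i : ℕ) :
    dist (pt (i:ℝ) (h i)) (pt ((i:ℝ)+1) (h (i+1))) = Real.sqrt (1 + (h (i+1) - h i)^2) := by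
  rw [dist_pt]
  congr 1
  ring

lemma dist_pt_nat' (h : ℕ → ℝ) (i : ℕ) :
    dist (pt (i:ℝ) (h i)) (pt ((i+1:ℕ):ℝ) (h (i+1))) = Real.sqrt (1 + (h (i+1) - h i)^2) := by
  rw [cast_succ, dist_pt_nat]

lemma chainBound {m : ℕ} {c b : ℕ → ℝ}
    (hcontact : ∀ i, 0 < i → i < m → slp c i = slp c (i-1) ∨ c i = b i)
    (h0 : c 0 = b 0) (hlast : c m = b m) :
    ∑ i ∈ Finset.range m, Real.sqrt (1 + (slp c i)^2)
      ≤ ∑ i ∈ Finset.range m, Real.sqrt (1 + (slp b i)^2) := by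
  classical
  have main : ∀ k, k ≤ m → c k = b k →
      ∑ i ∈ Finset.range k, Real.sqrt (1 + (slp c i)^2)
        ≤ ∑ i ∈ Finset.range k, Real.sqrt (1 + (slp b i)^2) := by
    intro k
    induction k using Nat.strong_induction_on with
    | _ k ih =>
      intro hk hck
      rcases Nat.eq_zero_or_pos k with rfl | hkpos
      · simp
      · set P : ℕ → Prop := fun t => c t = b t with hP
        set j := Nat.findGreatest P (k-1) with hjdef
        have hPj : P j := Nat.findGreatest_spec (m := 0) (Nat.zero_le _) h0
        have hjk : j ≤ k - 1 := Nat.findGreatest_le _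
        have hnc : ∀ i, j < i → i < k → ¬ P i := fun i hji hik =>
          Nat.findGreatest_is_greatest hji (by omega)
        have hslope : ∀ i, j ≤ i → i < k → slp c i = slp c j := by
          intro i hji hik
          induction i, hji using Nat.le_induction with
          | base => rfl
          | succ i hji ih2 =>
              have hctc := hcontact (i+1) (by omega) (by omega)
              rcases hctc with he | he
              · rw [he]
                simp only [Nat.add_sub_cancel]
                exact ih2 (by omega)
              · exact absurd he (hnc (i+1) (by omega) (by omega))
        have hcast : ((k - j:ℕ):ℝ) = (k:ℝ) - j := by
          push_cast [show j ≤ k by omega]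
          ring
        have hrepl : ∑ i ∈ Finset.Ico j k, slp c i = ∑ _i ∈ Finset.Ico j k, slp c j :=
          Finset.sum_congr rfl (fun i hi =>
            hslope i (Finset.mem_Ico.1 hi).1 (Finset.mem_Ico.1 hi).2)
        have htel : c k - c j = ((k:ℝ) - j) * slp c j := by
          rw [← sum_slp c (show j ≤ k by omega), hrepl, Finset.sum_const, Nat.card_Ico,
            nsmul_eq_mul, hcast]
        have hblock : ∑ i ∈ Finset.Ico j k, Real.sqrt (1 + (slp c i)^2)
            ≤ ∑ i ∈ Finset.Ico j k, Real.sqrt (1 + (slp b i)^2) := by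
          have e1 : ∑ i ∈ Finset.Ico j k, Real.sqrt (1 + (slp c i)^2)
              = ((k:ℝ) - j) * Real.sqrt (1 + (slp c j)^2) := by
            have hrepl2 : ∑ i ∈ Finset.Ico j k, Real.sqrt (1 + (slp c i)^2)
                = ∑ _i ∈ Finset.Ico j k, Real.sqrt (1 + (slp c j)^2) :=
              Finset.sum_congr rfl (fun i hi => by
                rw [hslope i (Finset.mem_Ico.1 hi).1 (Finset.mem_Ico.1 hi).2])
            rw [hrepl2, Finset.sum_const, Nat.card_Ico, nsmul_eq_mul, hcast]
          have e2 : ((k:ℝ) - j) * Real.sqrt (1 + (slp c j)^2)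
              = dist (pt (j:ℝ) (b j)) (pt (k:ℝ) (b k)) := by
            rw [dist_pt]
            rw [show ((j:ℝ) - k)^2 + (b j - b k)^2
                = ((k:ℝ) - j)^2 * 1 + (((k:ℝ) - j) * slp c j)^2 by
              rw [← htel, hPj, hck]; ring]
            rw [show ((k:ℝ) - j)^2 * 1 + (((k:ℝ) - j) * slp c j)^2
                = ((k:ℝ) - j)^2 * (1 + (slp c j)^2) by ring]
            rw [Real.sqrt_mul (sq_nonneg _), Real.sqrt_sq (by
              have : (j:ℝ) ≤ (k:ℝ) := by exact_mod_cast (show j ≤ k by omega)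
              linarith)]
          have e3 : dist (pt (j:ℝ) (b j)) (pt (k:ℝ) (b k))
              ≤ ∑ i ∈ Finset.Ico j k, dist (pt (i:ℝ) (b i)) (pt ((i+1:ℕ):ℝ) (b (i+1))) :=
            chain_dist (fun i => pt (i:ℝ) (b i)) (show j ≤ k by omega)
          have e4 : ∑ i ∈ Finset.Ico j k, dist (pt (i:ℝ) (b i)) (pt ((i+1:ℕ):ℝ) (b (i+1)))
              = ∑ i ∈ Finset.Ico j k, Real.sqrt (1 + (slp b i)^2) := by
            refine Finset.sum_congr rfl (fun i _ => ?_)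
            rw [dist_pt_nat']
            rfl
          rw [e1]
          calc ((k:ℝ) - j) * Real.sqrt (1 + (slp c j)^2)
              = dist (pt (j:ℝ) (b j)) (pt (k:ℝ) (b k)) := e2
            _ ≤ _ := e3.trans (le_of_eq e4)
        have hIH := ih j (by omega) (by omega) hPj
        have hsplitc : ∑ i ∈ Finset.range k, Real.sqrt (1 + (slp c i)^2)
            = ∑ i ∈ Finset.range j, Real.sqrt (1 + (slp c i)^2)
              + ∑ i ∈ Finset.Ico j k, Real.sqrt (1 + (slp c i)^2) := by
          simp only [Finset.range_eq_Ico]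
          exact (Finset.sum_Ico_consecutive _ (Nat.zero_le j) (show j ≤ k by omega)).symm
        have hsplitb : ∑ i ∈ Finset.range k, Real.sqrt (1 + (slp b i)^2)
            = ∑ i ∈ Finset.range j, Real.sqrt (1 + (slp b i)^2)
              + ∑ i ∈ Finset.Ico j k, Real.sqrt (1 + (slp b i)^2) := by
          simp only [Finset.range_eq_Ico]
          exact (Finset.sum_Ico_consecutive _ (Nat.zero_le j) (show j ≤ k by omega)).symm
        rw [hsplitc, hsplitb]
        linarith
  exact main m le_rfl hlast



lemma cross_route (N : ℕ) (c c' : ℕ → E2) (h0 : c 0 = c' 0) (hn : c N = c' N)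
    {i j : ℕ} (hi : i ≤ N) (hj : j ≤ N) :
    2 * dist (c i) (c' j) ≤ (∑ t ∈ Finset.range N, dist (c t) (c (t+1)))
      + ∑ t ∈ Finset.range N, dist (c' t) (c' (t+1)) := by
  have hsplit1 : (∑ t ∈ Finset.range N, dist (c t) (c (t+1)))
      = (∑ t ∈ Finset.Ico 0 i, dist (c t) (c (t+1)))
        + (∑ t ∈ Finset.Ico i N, dist (c t) (c (t+1))) := by
    simp only [Finset.range_eq_Ico]
    exact (Finset.sum_Ico_consecutive _ (Nat.zero_le i) hi).symm
  have hsplit2 : (∑ t ∈ Finset.range N, dist (c' t) (c' (t+1)))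
      = (∑ t ∈ Finset.Ico 0 j, dist (c' t) (c' (t+1)))
        + (∑ t ∈ Finset.Ico j N, dist (c' t) (c' (t+1))) := by
    simp only [Finset.range_eq_Ico]
    exact (Finset.sum_Ico_consecutive _ (Nat.zero_le j) hj).symm
  have r1 : dist (c i) (c' j) ≤ (∑ t ∈ Finset.Ico 0 i, dist (c t) (c (t+1)))
      + (∑ t ∈ Finset.Ico 0 j, dist (c' t) (c' (t+1))) := by
    have t1 : dist (c i) (c 0) ≤ ∑ t ∈ Finset.Ico 0 i, dist (c t) (c (t+1)) := by
      rw [dist_comm]; exact chain_dist c (Nat.zero_le i)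
    have t2 : dist (c' 0) (c' j) ≤ ∑ t ∈ Finset.Ico 0 j, dist (c' t) (c' (t+1)) :=
      chain_dist c' (Nat.zero_le j)
    calc dist (c i) (c' j) ≤ dist (c i) (c 0) + dist (c 0) (c' j) := dist_triangle _ _ _
      _ = dist (c i) (c 0) + dist (c' 0) (c' j) := by rw [h0]
      _ ≤ _ := by linarith
  have r2 : dist (c i) (c' j) ≤ (∑ t ∈ Finset.Ico i N, dist (c t) (c (t+1)))
      + (∑ t ∈ Finset.Ico j N, dist (c' t) (c' (t+1))) := by
    have t1 : dist (c i) (c N) ≤ ∑ t ∈ Finset.Ico i N, dist (c t) (c (t+1)) :=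
      chain_dist c hi
    have t2 : dist (c' N) (c' j) ≤ ∑ t ∈ Finset.Ico j N, dist (c' t) (c' (t+1)) := by
      rw [dist_comm]; exact chain_dist c' hj
    calc dist (c i) (c' j) ≤ dist (c i) (c N) + dist (c N) (c' j) := dist_triangle _ _ _
      _ = dist (c i) (c N) + dist (c' N) (c' j) := by rw [hn]
      _ ≤ _ := by linarith
  rw [hsplit1, hsplit2]
  linarith

variable (n : ℕ) (a : ℕ → ℝ)

lemma NC_of_not_collinear (hn : 1 ≤ n) (hcol : ¬ Collinear ℝ (Sp n a)) :
    ∀ j, j + 1 ≤ n → ¬(fl n a j = gu n a j ∧ fl n a (j+1) = gu n a (j+1)) := by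
  intro j hj hcon
  obtain ⟨e1, e2⟩ := hcon
  apply hcol
  set d : ℕ → ℝ := fun i => fl n a i - gu n a i with hd
  have hdconv : ∀ i, i+2 ≤ n → 2 * d (i+1) ≤ d i + d (i+2) := by
    intro i hi
    have h1 := fl_convex n a i hi
    have h2 := gu_concave n a i hi
    simp only [hd]; linarith
  have hdj : d j = 0 := by simp only [hd]; rw [e1]; ring
  have hsl : slp d j = 0 := by
    simp only [slp, hd]; rw [e1, e2]; ring
  have hzero : ∀ m ≤ n, d m = 0 := by
    intro m hm
    have hle : d m ≤ 0 := by simp only [hd]; linarith [fl_le_gu n a m hm]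
    have hge := secant (m := n) (c := d) hdconv (j := j) (k := m) hj hm
    rw [hsl, hdj] at hge
    simp at hge
    linarith
  have hfleq : ∀ m ≤ n, a m = fl n a m := by
    intro m hm
    have h1 := fl_le_a n a m hm
    have h2 := a_le_gu n a m hm
    have h3 := hzero m hm
    simp only [hd] at h3
    linarith
  have hgueq : ∀ m ≤ n, gu n a m = fl n a m := by
    intro m hm
    have h3 := hzero m hm
    simp only [hd] at h3
    linarith
  have hconst : ∀ m, m + 1 ≤ n → slp (fl n a) m = slp (fl n a) 0 := by
    intro m hm
    have h1 := slope_mono (fl_convex n a) 0 m (Nat.zero_le m) hm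
    have h2 : slp (fun t => -(gu n a t)) 0 ≤ slp (fun t => -(gu n a t)) m :=
      slope_mono (neg_gu_convex n a) 0 m (Nat.zero_le m) hm
    simp only [slp] at h1 h2 ⊢
    rw [hgueq 0 (by omega), hgueq 1 (by omega), hgueq m (by omega),
      hgueq (m+1) (by omega)] at h2
    linarith
  rw [collinear_iff_of_mem (show pt ((0:ℕ):ℝ) (a 0) ∈ Sp n a from ⟨0, by omega, rfl⟩)]
  refine ⟨pt 1 (slp (fl n a) 0), ?_⟩
  rintro p ⟨i, hi, rfl⟩
  refine ⟨(i:ℝ), ?_⟩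
  have hai : a i = a 0 + i * slp (fl n a) 0 := by
    have htel := sum_slp (fl n a) (Nat.zero_le i)
    have hrepl : ∑ t ∈ Finset.Ico 0 i, slp (fl n a) t
        = ∑ _t ∈ Finset.Ico 0 i, slp (fl n a) 0 :=
      Finset.sum_congr rfl (fun t ht => hconst t (by
        have := (Finset.mem_Ico.1 ht).2; omega))
    rw [hrepl, Finset.sum_const, Nat.card_Ico, nsmul_eq_mul] at htel
    have hcast : ((i - 0:ℕ):ℝ) = (i:ℝ) := by norm_num
    rw [hcast] at htel
    rw [hfleq i hi, hfleq 0 (by omega)]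
    linarith
  show pt (i:ℝ) (a i) = (i:ℝ) • pt 1 (slp (fl n a) 0) +ᵥ pt ((0:ℕ):ℝ) (a 0)
  rw [vadd_eq_add, smul_pt, add_pt]
  rw [hai]
  congr 1 <;> push_cast <;> ring

lemma hull_eq (hn : 1 ≤ n) : convexHull ℝ (polyCurve a n) = K n a := by
  apply Set.Subset.antisymm
  · apply convexHull_min _ (K_convex n a)
    intro z hz
    simp only [polyCurve, Set.mem_iUnion, Finset.mem_range] at hz
    obtain ⟨i, hi, hseg⟩ := hz
    have h1 := mem_K_pt n a i (by omega)
    have h2 := mem_K_pt n a (i+1) hi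
    refine (K_convex n a).segment_subset h1 ?_ hseg
    rwa [cast_succ] at h2
  · apply convexHull_min _ (convex_convexHull ℝ _)
    rintro p ⟨i, hi, rfl⟩
    apply subset_convexHull
    simp only [polyCurve, Set.mem_iUnion, Finset.mem_range]
    rcases lt_or_ge i n with hlt | hge
    · exact ⟨i, hlt, left_mem_segment ℝ _ _⟩
    · have hieq : i = n := le_antisymm hi hge
      refine ⟨i-1, by omega, ?_⟩
      rw [show i - 1 + 1 = i by omega,
        show ((i-1:ℕ):ℝ)+1 = (i:ℝ) by push_cast [show 1 ≤ i by omega]; ring]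
      exact right_mem_segment ℝ _ _

lemma vert_max {x y yl yu : ℝ} (q : E2) (h1 : yl ≤ y) (h2 : y ≤ yu) :
    dist (pt x y) q ≤ max (dist (pt x yl) q) (dist (pt x yu) q) := by
  rw [show q = pt (q 0) (q 1) from eq_pt q, dist_pt, dist_pt, dist_pt]
  rcases le_total y (q 1) with hy | hy
  · refine le_max_iff.2 (Or.inl (Real.sqrt_le_sqrt ?_))
    nlinarith [mul_nonneg (sub_nonneg.2 h1) (by linarith : (0:ℝ) ≤ 2*(q 1) - yl - y)]
  · refine le_max_iff.2 (Or.inr (Real.sqrt_le_sqrt ?_))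
    nlinarith [mul_nonneg (sub_nonneg.2 h2) (by linarith : (0:ℝ) ≤ yu + y - 2*(q 1))]

lemma diam_bound (hn : 1 ≤ n) (i : ℕ) (hi : i < n) :
    2 * Real.sqrt (1 + (a (i+1) - a i)^2)
      ≤ (∑ j ∈ Finset.range n, Real.sqrt (1 + (fl n a (j+1) - fl n a j)^2))
        + ∑ j ∈ Finset.range n, Real.sqrt (1 + (gu n a (j+1) - gu n a j)^2) := by
  set cF : ℕ → E2 := fun m => pt (m:ℝ) (fl n a m) with hcF
  set cG : ℕ → E2 := fun m => pt (m:ℝ) (gu n a m) with hcG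
  have h0 : cF 0 = cG 0 := by
    simp only [hcF, hcG, Nat.cast_zero]
    rw [fl_zero, gu_zero]
  have hnn : cF n = cG n := by
    simp only [hcF, hcG]
    rw [fl_last, gu_last]
  have hLF : ∑ t ∈ Finset.range n, dist (cF t) (cF (t+1))
      = ∑ j ∈ Finset.range n, Real.sqrt (1 + (fl n a (j+1) - fl n a j)^2) :=
    Finset.sum_congr rfl fun t _ => by
      simp only [hcF]
      exact dist_pt_nat' (fl n a) t
  have hLG : ∑ t ∈ Finset.range n, dist (cG t) (cG (t+1))
      = ∑ j ∈ Finset.range n, Real.sqrt (1 + (gu n a (j+1) - gu n a j)^2) :=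
    Finset.sum_congr rfl fun t _ => by
      simp only [hcG]
      exact dist_pt_nat' (gu n a) t
  set P1 : E2 := pt ((i:ℝ)+1) (a (i+1)) with hP1
  have ecF : cF (i+1) = pt ((i:ℝ)+1) (fl n a (i+1)) := by
    simp only [hcF]; rw [cast_succ]
  have ecG : cG (i+1) = pt ((i:ℝ)+1) (gu n a (i+1)) := by
    simp only [hcG]; rw [cast_succ]
  have step1 : dist (pt (i:ℝ) (a i)) P1
      ≤ max (dist (cF i) P1) (dist (cG i) P1) :=
    vert_max _ (fl_le_a n a i (by omega)) (a_le_gu n a i (by omega))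
  have s2F : dist (cF i) P1 ≤ max (dist (cF i) (cF (i+1))) (dist (cF i) (cG (i+1))) := by
    rw [dist_comm (cF i) P1, dist_comm (cF i) (cF (i+1)), dist_comm (cF i) (cG (i+1))]
    rw [ecF, ecG, hP1]
    exact vert_max _ (fl_le_a n a (i+1) hi) (a_le_gu n a (i+1) hi)
  have s2G : dist (cG i) P1 ≤ max (dist (cG i) (cF (i+1))) (dist (cG i) (cG (i+1))) := by
    rw [dist_comm (cG i) P1, dist_comm (cG i) (cF (i+1)), dist_comm (cG i) (cG (i+1))]
    rw [ecF, ecG, hP1]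
    exact vert_max _ (fl_le_a n a (i+1) hi) (a_le_gu n a (i+1) hi)
  set SF := ∑ t ∈ Finset.range n, dist (cF t) (cF (t+1)) with hSF
  set SG := ∑ t ∈ Finset.range n, dist (cG t) (cG (t+1)) with hSG
  have bFF : 2 * dist (cF i) (cF (i+1)) ≤ SF + SG :=
    same_route n cF cG h0 hnn (Nat.le_succ i) hi
  have bFG : 2 * dist (cF i) (cG (i+1)) ≤ SF + SG :=
    cross_route n cF cG h0 hnn (by omega) hi
  have bGF : 2 * dist (cG i) (cF (i+1)) ≤ SF + SG := by
    have := cross_route n cG cF h0.symm hnn.symm (show i ≤ n by omega) hi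
    linarith
  have bGG : 2 * dist (cG i) (cG (i+1)) ≤ SF + SG := by
    have := same_route n cG cF h0.symm hnn.symm (Nat.le_succ i) hi
    linarith
  have hkey : 2 * dist (pt (i:ℝ) (a i)) P1 ≤ SF + SG := by
    have hmax1 : dist (cF i) P1 ≤ (SF + SG)/2 :=
      s2F.trans (max_le (by linarith) (by linarith))
    have hmax2 : dist (cG i) P1 ≤ (SF + SG)/2 :=
      s2G.trans (max_le (by linarith) (by linarith))
    have := step1.trans (max_le hmax1 hmax2)
    linarith
  rw [hP1, dist_pt_nat] at hkey
  rw [← hLF, ← hLG]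
  linarith


end IC

/-- The inconstancy of the polygonal curve through `(0,0), (1,a₁), …, (n,a_n)` (points
not all collinear) lies between `1` and `n`. -/
theorem one_le_polyIncon_le (n : ℕ) (hn : 1 ≤ n) (a : ℕ → ℝ) (h0 : a 0 = 0)
    (hcol : ¬ Collinear ℝ {p : EuclideanSpace ℝ (Fin 2) | ∃ i ≤ n, p = pt i (a i)}) :
    1 ≤ polyIncon a n ∧ polyIncon a n ≤ n := by
  classical
  have hcol' : ¬ Collinear ℝ (IC.Sp n a) := hcol
  have hNC := IC.NC_of_not_collinear n a hn hcol'
  have hLFnn : 0 ≤ ∑ j ∈ Finset.range n, Real.sqrt (1 + (IC.fl n a (j+1) - IC.fl n a j)^2) :=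
    Finset.sum_nonneg fun _ _ => Real.sqrt_nonneg _
  have hLGnn : 0 ≤ ∑ j ∈ Finset.range n, Real.sqrt (1 + (IC.gu n a (j+1) - IC.gu n a j)^2) :=
    Finset.sum_nonneg fun _ _ => Real.sqrt_nonneg _
  have hδ : polyDelta a n
      = (∑ j ∈ Finset.range n, Real.sqrt (1 + (IC.fl n a (j+1) - IC.fl n a j)^2))
        + ∑ j ∈ Finset.range n, Real.sqrt (1 + (IC.gu n a (j+1) - IC.gu n a j)^2) := by
    rw [polyDelta, IC.hull_eq n a hn, IC.meas_frontier n a hn hNC,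
      show (∑ j ∈ Finset.range n,
          dist (pt (j:ℝ) (IC.fl n a j)) (pt ((j:ℝ)+1) (IC.fl n a (j+1))))
        = ∑ j ∈ Finset.range n, Real.sqrt (1 + (IC.fl n a (j+1) - IC.fl n a j)^2) from
        Finset.sum_congr rfl fun j _ => IC.dist_pt_nat (IC.fl n a) j,
      show (∑ j ∈ Finset.range n,
          dist (pt (j:ℝ) (IC.gu n a j)) (pt ((j:ℝ)+1) (IC.gu n a (j+1))))
        = ∑ j ∈ Finset.range n, Real.sqrt (1 + (IC.gu n a (j+1) - IC.gu n a j)^2) from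
        Finset.sum_congr rfl fun j _ => IC.dist_pt_nat (IC.gu n a) j,
      ENNReal.toReal_add ENNReal.ofReal_ne_top ENNReal.ofReal_ne_top,
      ENNReal.toReal_ofReal hLFnn, ENNReal.toReal_ofReal hLGnn]
  have hdiam := IC.diam_bound n a hn
  have hδpos : 0 < (∑ j ∈ Finset.range n, Real.sqrt (1 + (IC.fl n a (j+1) - IC.fl n a j)^2))
      + ∑ j ∈ Finset.range n, Real.sqrt (1 + (IC.gu n a (j+1) - IC.gu n a j)^2) := by
    have h00 := hdiam 0 hn
    have hone : (1:ℝ) ≤ Real.sqrt (1 + (a (0+1) - a 0)^2) := by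
      have := Real.sqrt_le_sqrt (show (1:ℝ) ≤ 1 + (a (0+1) - a 0)^2 by
        nlinarith [sq_nonneg (a (0+1) - a 0)])
      rwa [Real.sqrt_one] at this
    linarith
  have hLF_le : (∑ j ∈ Finset.range n, Real.sqrt (1 + (IC.fl n a (j+1) - IC.fl n a j)^2))
      ≤ polyLength a n := by
    have hct : ∀ i, 0 < i → i < n →
        IC.slp (IC.fl n a) i = IC.slp (IC.fl n a) (i-1) ∨ IC.fl n a i = a i := by
      intro i hip hin
      rcases eq_or_ne (IC.fl n a i) (a i) with he | he
      · exact Or.inr he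
      · left
        have hc := IC.contact_fl n a (i-1) (by omega) (by
          rwa [show i-1+1 = i by omega])
        rwa [show i-1+1 = i by omega] at hc
    have := IC.chainBound (m := n) (c := IC.fl n a) (b := a) hct
      (IC.fl_zero n a) (IC.fl_last n a)
    simpa [IC.slp, polyLength] using this
  have hLG_le : (∑ j ∈ Finset.range n, Real.sqrt (1 + (IC.gu n a (j+1) - IC.gu n a j)^2))
      ≤ polyLength a n := by
    have hct : ∀ i, 0 < i → i < n →
        IC.slp (fun t => -(IC.gu n a t)) i = IC.slp (fun t => -(IC.gu n a t)) (i-1)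
          ∨ -(IC.gu n a i) = -(a i) := by
      intro i hip hin
      rcases eq_or_ne (IC.gu n a i) (a i) with he | he
      · exact Or.inr (congrArg Neg.neg he)
      · left
        have hc := IC.contact_gu n a (i-1) (by omega) (by
          rwa [show i-1+1 = i by omega])
        rw [show i-1+1 = i by omega] at hc
        simp only [IC.slp] at hc ⊢
        linarith
    have hcb := IC.chainBound (m := n) (c := fun t => -(IC.gu n a t)) (b := fun t => -(a t))
      hct (congrArg Neg.neg (IC.gu_zero n a)) (congrArg Neg.neg (IC.gu_last n a))
    have e1 : ∑ i ∈ Finset.range n, Real.sqrt (1 + (IC.slp (fun t => -(IC.gu n a t)) i)^2)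
        = ∑ j ∈ Finset.range n, Real.sqrt (1 + (IC.gu n a (j+1) - IC.gu n a j)^2) :=
      Finset.sum_congr rfl fun i _ => by
        simp only [IC.slp]
        congr 1
        ring
    have e2 : ∑ i ∈ Finset.range n, Real.sqrt (1 + (IC.slp (fun t => -(a t)) i)^2)
        = polyLength a n :=
      Finset.sum_congr rfl fun i _ => by
        simp only [IC.slp]
        congr 1
        ring
    rw [e1, e2] at hcb
    exact hcb
  constructor
  · rw [polyIncon, hδ, le_div_iff₀ hδpos, one_mul]
    have := hLF_le
    have := hLG_le
    linarith
  · rw [polyIncon, hδ, div_le_iff₀ hδpos]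
    have h2l : 2 * polyLength a n
        = ∑ i ∈ Finset.range n, 2 * Real.sqrt (1+(a (i+1) - a i)^2) := by
      rw [polyLength, Finset.mul_sum]
    rw [h2l]
    calc ∑ i ∈ Finset.range n, 2 * Real.sqrt (1+(a (i+1) - a i)^2)
        ≤ ∑ _i ∈ Finset.range n,
            ((∑ j ∈ Finset.range n, Real.sqrt (1 + (IC.fl n a (j+1) - IC.fl n a j)^2))
              + ∑ j ∈ Finset.range n, Real.sqrt (1 + (IC.gu n a (j+1) - IC.gu n a j)^2)) :=
          Finset.sum_le_sum fun i hi => hdiam i (Finset.mem_range.1 hi)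
      _ = (n:ℝ) * _ := by rw [Finset.sum_const, Finset.card_range, nsmul_eq_mul]
end
end

section
/- Let h > 0, N ≥ 2, and let u₀, u₁, …, u_N be real numbers each equal to 0 or h, with u₀ = 0, and such that h is attained. Let α ≥ 1 be the least index with u_α = h (the length of the longest initial string of 0's), and suppose u_N = 0; let β ≥ 1 be such that N − β is the greatest index with value h (the length of the longest final string of 0's). Let N₀₀, N_hh, N₀h, N_h0 be respectively the number of indices 0 ≤ i < N with (u_i, u_{i+1}) equal to (0,0), (h,h), (0,h), (h,0). Let Γ_N ⊆ ℝ² be the polygonal curve through (0,u₀), (1,u₁), …, (N,u_N), with length ℓ(Γ_N) = Σ_{i<N} √(1 + (u_{i+1} − u_i)²), and let δ(Γ_N) be the one-dimensional Hausdorff measure of the frontier of the convex hull of Γ_N. Then the inconstancy ℐ(Γ_N) := 2ℓ(Γ_N)/δ(Γ_N) equals 2(N₀₀ + N_hh + √(1 + h²)(N₀h + N_h0)) / (√(h² + α²) + N − α − β + √(h² + β²) + N). -/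
noncomputable section
open MeasureTheory Real Set Filter
open scoped ENNReal

lemma pt_zero (x y : ℝ) : pt x y 0 = x := rfl
lemma pt_one (x y : ℝ) : pt x y 1 = y := rfl

lemma pt_ext (p : EuclideanSpace ℝ (Fin 2)) : p = pt (p 0) (p 1) := by
  ext i; fin_cases i <;> rfl

lemma smul_add_pt (a b x y x' y' : ℝ) :
    a • pt x y + b • pt x' y' = pt (a*x+b*x') (a*y+b*y') := by
  ext i; fin_cases i <;>
    simp [pt, PiLp.add_apply, PiLp.smul_apply, smul_eq_mul]

lemma dist_pt (x y x' y' : ℝ) :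
    dist (pt x y) (pt x' y') = Real.sqrt ((x-x')^2 + (y-y')^2) := by
  rw [EuclideanSpace.dist_eq]
  simp [Fin.sum_univ_two, pt, Real.dist_eq, sq_abs]

lemma seg_mem (x₁ y₁ x₂ y₂ t : ℝ) (h0 : 0 ≤ t) (h1 : t ≤ 1) :
    pt ((1-t)*x₁+t*x₂) ((1-t)*y₁+t*y₂) ∈ segment ℝ (pt x₁ y₁) (pt x₂ y₂) :=
  ⟨1-t, t, by linarith, h0, by ring, by rw [smul_add_pt]⟩

lemma seg_rep {p : EuclideanSpace ℝ (Fin 2)} {x₁ y₁ x₂ y₂ : ℝ}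
    (hp : p ∈ segment ℝ (pt x₁ y₁) (pt x₂ y₂)) :
    ∃ t, 0 ≤ t ∧ t ≤ 1 ∧ p = pt ((1-t)*x₁+t*x₂) ((1-t)*y₁+t*y₂) := by
  obtain ⟨a, b, ha, hb, hab, rfl⟩ := hp
  have : a = 1 - b := by linarith
  subst this
  exact ⟨b, hb, by linarith, by rw [smul_add_pt]⟩

lemma exists_t {a b x : ℝ} (h1 : a ≤ x) (h2 : x ≤ b) :
    ∃ t, 0 ≤ t ∧ t ≤ 1 ∧ x = (1-t)*a + t*b := by
  have hx : x ∈ segment ℝ a b := by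
    rw [segment_eq_Icc (h1.trans h2)]; exact ⟨h1, h2⟩
  obtain ⟨s, t, hs, ht, hst, hx⟩ := hx
  simp only [smul_eq_mul] at hx
  exact ⟨t, ht, by linarith, by linear_combination a * hst - hx⟩

lemma seg_mem' {p : EuclideanSpace ℝ (Fin 2)} (x₁ y₁ x₂ y₂ t : ℝ) (h0 : 0 ≤ t) (h1 : t ≤ 1)
    (hx : p 0 = (1-t)*x₁+t*x₂) (hy : p 1 = (1-t)*y₁+t*y₂) :
    p ∈ segment ℝ (pt x₁ y₁) (pt x₂ y₂) := by
  have hp : p = pt ((1-t)*x₁+t*x₂) ((1-t)*y₁+t*y₂) := by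
    ext i; fin_cases i
    · exact hx
    · exact hy
  rw [hp]; exact seg_mem x₁ y₁ x₂ y₂ t h0 h1

def trap (h A B n : ℝ) : Set (EuclideanSpace ℝ (Fin 2)) :=
  {p | 0 ≤ p 1 ∧ p 1 ≤ h ∧ A * p 1 ≤ h * p 0 ∧ B * p 1 ≤ h * (n - p 0)}

lemma contin (c d : ℝ) : Continuous fun p : EuclideanSpace ℝ (Fin 2) => c * p 0 + d * p 1 := by
  fun_prop

lemma trap_convex (h A B n : ℝ) : Convex ℝ (trap h A B n) := by
  intro x hx y hy a b ha hb hab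
  obtain ⟨h1, h2, h3, h4⟩ := hx
  obtain ⟨k1, k2, k3, k4⟩ := hy
  have e0 : (a • x + b • y) 0 = a * x 0 + b * y 0 := rfl
  have e1 : (a • x + b • y) 1 = a * x 1 + b * y 1 := rfl
  have habh : a*h + b*h = h := by rw [← add_mul, hab, one_mul]
  have habn : a*(h*n) + b*(h*n) = h*n := by rw [← add_mul, hab, one_mul]
  refine ⟨?_, ?_, ?_, ?_⟩ <;> simp only [e0, e1] <;>
    nlinarith [mul_le_mul_of_nonneg_left h3 ha, mul_le_mul_of_nonneg_left k3 hb,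
      mul_le_mul_of_nonneg_left h4 ha, mul_le_mul_of_nonneg_left k4 hb,
      mul_le_mul_of_nonneg_left h2 ha, mul_le_mul_of_nonneg_left k2 hb,
      mul_nonneg ha h1, mul_nonneg hb k1]

lemma trap_closed (h A B n : ℝ) : IsClosed (trap h A B n) := by
  have c0 : Continuous fun p : EuclideanSpace ℝ (Fin 2) => p 0 := by fun_prop
  have c1 : Continuous fun p : EuclideanSpace ℝ (Fin 2) => p 1 := by fun_prop
  have : trap h A B n = {p : EuclideanSpace ℝ (Fin 2) | 0 ≤ p 1} ∩
      ({p | p 1 ≤ h} ∩ ({p | A * p 1 ≤ h * p 0} ∩ {p | B * p 1 ≤ h * (n - p 0)})) := by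
    ext p; simp [trap, mem_setOf_eq, and_assoc]
  rw [this]
  exact (isClosed_le continuous_const c1).inter <| (isClosed_le c1 continuous_const).inter <|
    (isClosed_le (by fun_prop) (by fun_prop)).inter (isClosed_le (by fun_prop) (by fun_prop))

lemma trap_interior {h : ℝ} (hh : 0 < h) (A B n : ℝ) :
    interior (trap h A B n) =
      {p | 0 < p 1 ∧ p 1 < h ∧ A * p 1 < h * p 0 ∧ B * p 1 < h * (n - p 0)} := by
  have c0 : Continuous fun p : EuclideanSpace ℝ (Fin 2) => p 0 := by fun_prop
  have c1 : Continuous fun p : EuclideanSpace ℝ (Fin 2) => p 1 := by fun_prop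
  apply Subset.antisymm
  · intro p hp
    rw [mem_interior_iff_mem_nhds, Metric.mem_nhds_iff] at hp
    obtain ⟨ε, hε, hball⟩ := hp
    have key : ∀ v : EuclideanSpace ℝ (Fin 2), ‖v‖ = 1 → p + (ε/2) • v ∈ trap h A B n := by
      intro v hv
      apply hball
      rw [Metric.mem_ball, dist_eq_norm]
      simp only [add_sub_cancel_left, norm_smul, hv, mul_one]
      rw [Real.norm_eq_abs, abs_of_pos (by linarith)]
      linarith
    have hn1 : ‖pt 0 (-1)‖ = 1 := by
      rw [EuclideanSpace.norm_eq]; simp [pt, Fin.sum_univ_two]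
    have hp1 : ‖pt 0 1‖ = 1 := by
      rw [EuclideanSpace.norm_eq]; simp [Fin.sum_univ_two, pt]
    have hm0 : ‖pt (-1) 0‖ = 1 := by
      rw [EuclideanSpace.norm_eq]; simp [pt, Fin.sum_univ_two]
    have hq0 : ‖pt 1 0‖ = 1 := by
      rw [EuclideanSpace.norm_eq]; simp [Fin.sum_univ_two, pt]
    have eadd : ∀ (v : EuclideanSpace ℝ (Fin 2)) (i : Fin 2),
        (p + (ε/2) • v) i = p i + (ε/2) * v i := fun v i => rfl
    have K1 := key _ hn1; have K2 := key _ hp1; have K3 := key _ hm0; have K4 := key _ hq0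
    simp only [trap, mem_setOf_eq, eadd, pt] at K1 K2 K3 K4
    norm_num at K1 K2 K3 K4
    obtain ⟨a1, -, -, -⟩ := K1
    obtain ⟨-, a2, -, -⟩ := K2
    obtain ⟨-, -, a3, -⟩ := K3
    obtain ⟨-, -, -, a4⟩ := K4
    refine ⟨by linarith, by linarith, by nlinarith, by nlinarith⟩
  · apply interior_maximal
    · intro p hp
      exact ⟨hp.1.le, hp.2.1.le, hp.2.2.1.le, hp.2.2.2.le⟩
    · have : {p : EuclideanSpace ℝ (Fin 2) | 0 < p 1 ∧ p 1 < h ∧ A * p 1 < h * p 0 ∧ B * p 1 < h * (n - p 0)}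
          = {p : EuclideanSpace ℝ (Fin 2) | 0 < p 1} ∩
          ({p | p 1 < h} ∩ ({p | A * p 1 < h * p 0} ∩ {p | B * p 1 < h * (n - p 0)})) := by
        ext p; simp [mem_setOf_eq, and_assoc]
      rw [this]
      exact (isOpen_lt continuous_const c1).inter <| (isOpen_lt c1 continuous_const).inter <|
        (isOpen_lt (by fun_prop) (by fun_prop)).inter (isOpen_lt (by fun_prop) (by fun_prop))

lemma trap_frontier {h A B n : ℝ} (hh : 0 < h) (hA : 0 < A) (hB : 0 < B) (hAB : A + B ≤ n) :
    frontier (trap h A B n) =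
      segment ℝ (pt 0 0) (pt n 0) ∪ segment ℝ (pt A h) (pt (n-B) h) ∪
      (segment ℝ (pt 0 0) (pt A h) ∪ segment ℝ (pt n 0) (pt (n-B) h)) := by
  rw [(trap_closed h A B n).frontier_eq, trap_interior hh]
  ext p
  simp only [mem_diff, mem_setOf_eq, mem_union, trap]
  constructor
  · rintro ⟨⟨c1, c2, c3, c4⟩, hne⟩
    have hcase : p 1 = 0 ∨ p 1 = h ∨ A * p 1 = h * p 0 ∨ B * p 1 = h * (n - p 0) := by
      by_contra hc
      push_neg at hc
      exact hne ⟨c1.lt_of_ne (Ne.symm hc.1), c2.lt_of_ne hc.2.1,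
        c3.lt_of_ne hc.2.2.1, c4.lt_of_ne hc.2.2.2⟩
    rcases hcase with h0 | h0 | h0 | h0
    · left; left
      have hx0 : 0 ≤ p 0 := by nlinarith
      have hxn : p 0 ≤ n := by nlinarith
      obtain ⟨t, ht0, ht1, hx⟩ := exists_t hx0 hxn
      exact seg_mem' 0 0 n 0 t ht0 ht1 hx (by rw [h0]; ring)
    · left; right
      have hx0 : A ≤ p 0 := by
        have := (mul_le_mul_iff_right₀ hh).mp (by nlinarith : h * A ≤ h * p 0); linarith
      have hxn : p 0 ≤ n - B := by
        have := (mul_le_mul_iff_right₀ hh).mp (by nlinarith : h * p 0 ≤ h * (n - B)); linarith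
      obtain ⟨t, ht0, ht1, hx⟩ := exists_t hx0 hxn
      exact seg_mem' A h (n-B) h t ht0 ht1 hx (by rw [h0]; ring)
    · right; left
      refine seg_mem' 0 0 A h (p 1 / h) (div_nonneg c1 hh.le) ((div_le_one hh).mpr c2) ?_ ?_
      · field_simp; linarith
      · field_simp; ring
    · right; right
      refine seg_mem' n 0 (n-B) h (p 1 / h) (div_nonneg c1 hh.le) ((div_le_one hh).mpr c2) ?_ ?_
      · field_simp; ring_nf; nlinarith [h0]
      · field_simp; ring
  · rintro ((hp | hp) | (hp | hp)) <;> obtain ⟨t, ht0, ht1, rfl⟩ := seg_rep hp <;>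
      simp only [pt_zero, pt_one] <;>
      [skip; skip; skip; skip] <;>
      refine ⟨⟨by nlinarith [mul_nonneg (mul_nonneg hh.le ht0) (show (0:ℝ) ≤ n - B - A by linarith),
          mul_nonneg (mul_nonneg hh.le (show (0:ℝ) ≤ 1-t by linarith)) (show (0:ℝ) ≤ n - B - A by linarith),
          mul_nonneg (mul_nonneg hh.le ht0) (show (0:ℝ) ≤ n by linarith),
          mul_nonneg (mul_nonneg hh.le (show (0:ℝ) ≤ 1-t by linarith)) (show (0:ℝ) ≤ n by linarith),
          mul_nonneg (mul_nonneg hh.le ht0) hA.le, mul_nonneg (mul_nonneg hh.le ht0) hB.le],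
        by nlinarith [mul_nonneg (mul_nonneg hh.le ht0) (show (0:ℝ) ≤ n - B - A by linarith),
          mul_nonneg (mul_nonneg hh.le (show (0:ℝ) ≤ 1-t by linarith)) (show (0:ℝ) ≤ n - B - A by linarith),
          mul_nonneg (mul_nonneg hh.le ht0) (show (0:ℝ) ≤ n by linarith),
          mul_nonneg (mul_nonneg hh.le (show (0:ℝ) ≤ 1-t by linarith)) (show (0:ℝ) ≤ n by linarith),
          mul_nonneg (mul_nonneg hh.le ht0) hA.le, mul_nonneg (mul_nonneg hh.le ht0) hB.le],
        by nlinarith [mul_nonneg (mul_nonneg hh.le ht0) (show (0:ℝ) ≤ n - B - A by linarith),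
          mul_nonneg (mul_nonneg hh.le (show (0:ℝ) ≤ 1-t by linarith)) (show (0:ℝ) ≤ n - B - A by linarith),
          mul_nonneg (mul_nonneg hh.le ht0) (show (0:ℝ) ≤ n by linarith),
          mul_nonneg (mul_nonneg hh.le (show (0:ℝ) ≤ 1-t by linarith)) (show (0:ℝ) ≤ n by linarith),
          mul_nonneg (mul_nonneg hh.le ht0) hA.le, mul_nonneg (mul_nonneg hh.le ht0) hB.le],
        by nlinarith [mul_nonneg (mul_nonneg hh.le ht0) (show (0:ℝ) ≤ n - B - A by linarith),
          mul_nonneg (mul_nonneg hh.le (show (0:ℝ) ≤ 1-t by linarith)) (show (0:ℝ) ≤ n - B - A by linarith),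
          mul_nonneg (mul_nonneg hh.le ht0) (show (0:ℝ) ≤ n by linarith),
          mul_nonneg (mul_nonneg hh.le (show (0:ℝ) ≤ 1-t by linarith)) (show (0:ℝ) ≤ n by linarith),
          mul_nonneg (mul_nonneg hh.le ht0) hA.le, mul_nonneg (mul_nonneg hh.le ht0) hB.le]⟩,
        fun hU => ?_⟩ <;>
      obtain ⟨k1, k2, k3, k4⟩ := hU
    · nlinarith
    · nlinarith
    · nlinarith
    · nlinarith

lemma isCompact_seg (x y : EuclideanSpace ℝ (Fin 2)) : IsCompact (segment ℝ x y) := by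
  rw [segment_eq_image]
  exact isCompact_Icc.image (by fun_prop)

lemma nms_seg (x y : EuclideanSpace ℝ (Fin 2)) :
    NullMeasurableSet (segment ℝ x y) (μH[1]) :=
  ((isCompact_seg x y).isClosed.measurableSet).nullMeasurableSet

lemma edist_pt (x y x' y' : ℝ) :
    edist (pt x y) (pt x' y') = ENNReal.ofReal (Real.sqrt ((x-x')^2 + (y-y')^2)) := by
  rw [edist_dist, dist_pt]

lemma trap_perimeter {h A B n : ℝ} (hh : 0 < h) (hA : 0 < A) (hB : 0 < B) (hAB : A + B ≤ n) :
    (μH[1] (frontier (trap h A B n))).toReal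
      = n + (n - A - B) + Real.sqrt (A^2+h^2) + Real.sqrt (B^2+h^2) := by
  haveI : NullSingletonClass (μH[1] : Measure (EuclideanSpace ℝ (Fin 2))) :=
    MeasureTheory.Measure.nullSingletonClass_hausdorff _ one_pos
  set Sb := segment ℝ (pt 0 0) (pt n 0) with hSb
  set St := segment ℝ (pt A h) (pt (n-B) h) with hSt
  set Sl := segment ℝ (pt 0 0) (pt A h) with hSl
  set Sr := segment ℝ (pt n 0) (pt (n-B) h) with hSr
  have hAB0 : 0 < A + B := by linarith
  -- null pairwise intersections
  have hbt : μH[1] (Sb ∩ St) = 0 := by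
    apply measure_mono_null (t := (∅ : Set (EuclideanSpace ℝ (Fin 2))))
    · rintro p ⟨h1, h2⟩
      obtain ⟨t, ht0, ht1, e1⟩ := seg_rep h1
      obtain ⟨s, hs0, hs1, e2⟩ := seg_rep h2
      have y1 : p 1 = (1-t)*0+t*0 := by rw [e1, pt_one]
      have y2 : p 1 = (1-s)*h+s*h := by rw [e2, pt_one]
      exfalso; nlinarith
    · exact measure_empty
  have hbl : μH[1] (Sb ∩ Sl) = 0 := by
    apply measure_mono_null (t := {pt 0 0})
    · rintro p ⟨h1, h2⟩
      obtain ⟨t, ht0, ht1, e1⟩ := seg_rep h1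
      obtain ⟨s, hs0, hs1, e2⟩ := seg_rep h2
      have y1 : p 1 = (1-t)*0+t*0 := by rw [e1, pt_one]
      have y2 : p 1 = (1-s)*0+s*h := by rw [e2, pt_one]
      have hs : s = 0 := by nlinarith
      subst hs
      rw [mem_singleton_iff, e2]; norm_num
    · exact measure_singleton _
  have hbr : μH[1] (Sb ∩ Sr) = 0 := by
    apply measure_mono_null (t := {pt n 0})
    · rintro p ⟨h1, h2⟩
      obtain ⟨t, ht0, ht1, e1⟩ := seg_rep h1
      obtain ⟨s, hs0, hs1, e2⟩ := seg_rep h2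
      have y1 : p 1 = (1-t)*0+t*0 := by rw [e1, pt_one]
      have y2 : p 1 = (1-s)*0+s*h := by rw [e2, pt_one]
      have hs : s = 0 := by nlinarith
      subst hs
      rw [mem_singleton_iff, e2]; norm_num
    · exact measure_singleton _
  have htl : μH[1] (St ∩ Sl) = 0 := by
    apply measure_mono_null (t := {pt A h})
    · rintro p ⟨h1, h2⟩
      obtain ⟨t, ht0, ht1, e1⟩ := seg_rep h1
      obtain ⟨s, hs0, hs1, e2⟩ := seg_rep h2
      have y1 : p 1 = (1-t)*h+t*h := by rw [e1, pt_one]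
      have y2 : p 1 = (1-s)*0+s*h := by rw [e2, pt_one]
      have hs : s = 1 := by nlinarith
      subst hs
      rw [mem_singleton_iff, e2]; norm_num
    · exact measure_singleton _
  have htr : μH[1] (St ∩ Sr) = 0 := by
    apply measure_mono_null (t := {pt (n-B) h})
    · rintro p ⟨h1, h2⟩
      obtain ⟨t, ht0, ht1, e1⟩ := seg_rep h1
      obtain ⟨s, hs0, hs1, e2⟩ := seg_rep h2
      have y1 : p 1 = (1-t)*h+t*h := by rw [e1, pt_one]
      have y2 : p 1 = (1-s)*0+s*h := by rw [e2, pt_one]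
      have hs : s = 1 := by nlinarith
      subst hs
      rw [mem_singleton_iff, e2]; norm_num
    · exact measure_singleton _
  have hlr : μH[1] (Sl ∩ Sr) = 0 := by
    apply measure_mono_null (t := {pt (A*(n/(A+B))) (h*(n/(A+B)))})
    · rintro p ⟨h1, h2⟩
      obtain ⟨t, ht0, ht1, e1⟩ := seg_rep h1
      obtain ⟨s, hs0, hs1, e2⟩ := seg_rep h2
      have y1 : p 1 = (1-t)*0+t*h := by rw [e1, pt_one]
      have y2 : p 1 = (1-s)*0+s*h := by rw [e2, pt_one]
      have x1 : p 0 = (1-t)*0+t*A := by rw [e1, pt_zero]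
      have x2 : p 0 = (1-s)*n+s*(n-B) := by rw [e2, pt_zero]
      have hts : t = s := by nlinarith
      subst hts
      have htv : t = n/(A+B) := by
        rw [eq_div_iff hAB0.ne']; nlinarith
      rw [mem_singleton_iff, e1]
      have g1 : (1-t)*0+t*A = A*(n/(A+B)) := by rw [← htv]; ring
      have g2 : (1-t)*0+t*h = h*(n/(A+B)) := by rw [← htv]; ring
      rw [g1, g2]
    · exact measure_singleton _
  -- assemble
  rw [trap_frontier hh hA hB hAB]
  have step1 : μH[1] ((Sb ∪ St) ∪ (Sl ∪ Sr)) = μH[1] (Sb ∪ St) + μH[1] (Sl ∪ Sr) := by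
    apply measure_union₀ ((nms_seg _ _).union (nms_seg _ _))
    apply measure_mono_null (t := (Sb ∩ Sl) ∪ (Sb ∩ Sr) ∪ ((St ∩ Sl) ∪ (St ∩ Sr)))
    · rintro p ⟨hp1 | hp1, hp2 | hp2⟩
      · exact Or.inl (Or.inl ⟨hp1, hp2⟩)
      · exact Or.inl (Or.inr ⟨hp1, hp2⟩)
      · exact Or.inr (Or.inl ⟨hp1, hp2⟩)
      · exact Or.inr (Or.inr ⟨hp1, hp2⟩)
    · rw [measure_union_null_iff, measure_union_null_iff, measure_union_null_iff]
      exact ⟨⟨hbl, hbr⟩, htl, htr⟩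
  have step2 : μH[1] (Sb ∪ St) = μH[1] Sb + μH[1] St :=
    measure_union₀ (nms_seg _ _) hbt
  have step3 : μH[1] (Sl ∪ Sr) = μH[1] Sl + μH[1] Sr :=
    measure_union₀ (nms_seg _ _) hlr
  rw [step1, step2, step3, hSb, hSt, hSl, hSr]
  rw [MeasureTheory.hausdorffMeasure_segment, MeasureTheory.hausdorffMeasure_segment,
    MeasureTheory.hausdorffMeasure_segment, MeasureTheory.hausdorffMeasure_segment]
  rw [edist_pt, edist_pt, edist_pt, edist_pt]
  rw [← ENNReal.ofReal_add (by positivity) (by positivity),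
    ← ENNReal.ofReal_add (by positivity) (by positivity),
    ← ENNReal.ofReal_add (by positivity) (by positivity),
    ENNReal.toReal_ofReal (by positivity)]
  have d1 : Real.sqrt ((0-n)^2 + ((0:ℝ)-0)^2) = n := by
    rw [show (0-n)^2 + ((0:ℝ)-0)^2 = n^2 by ring, Real.sqrt_sq (by linarith)]
  have d2 : Real.sqrt ((A-(n-B))^2 + (h-h)^2) = n - A - B := by
    rw [show (A-(n-B))^2 + (h-h)^2 = (n-A-B)^2 by ring, Real.sqrt_sq (by linarith)]
  have d3 : Real.sqrt ((0-A)^2 + (0-h)^2) = Real.sqrt (A^2+h^2) := by ring_nf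
  have d4 : Real.sqrt ((n-(n-B))^2 + (0-h)^2) = Real.sqrt (B^2+h^2) := by ring_nf
  rw [d1, d2, d3, d4]; ring
/-- The number of indices `0 ≤ i < N` with `u_i = j` and `u_{i+1} = j'`. -/
def blockCount (u : ℕ → ℝ) (N : ℕ) (j j' : ℝ) : ℕ :=
  ((Finset.range N).filter fun i => u i = j ∧ u (i + 1) = j').card


set_option maxHeartbeats 2000000 in
lemma hull_eq
    (h : ℝ) (hh : 0 < h) (N : ℕ) (hN : 2 ≤ N) (u : ℕ → ℝ)
    (hvals : ∀ i ≤ N, u i = 0 ∨ u i = h) (hu0 : u 0 = 0) (huN : u N = 0)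
    (α : ℕ) (hα1 : 1 ≤ α) (hαN : α ≤ N) (hαh : u α = h) (hαmin : ∀ i < α, u i = 0)
    (β : ℕ) (hβ1 : 1 ≤ β) (hβN : β ≤ N) (hβh : u (N - β) = h)
    (hβmax : ∀ i, N - β < i → i ≤ N → u i = 0) :
    convexHull ℝ (polyCurve u N) = trap h (α : ℝ) (β : ℝ) (N : ℝ) := by
  have hne : h ≠ 0 := hh.ne'
  have hαle : α ≤ N - β := by
    by_contra hc
    push_neg at hc
    exact hne (by rw [← hβh]; exact hαmin _ hc)
  have hcast : ((N - β : ℕ) : ℝ) = (N : ℝ) - (β : ℝ) := by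
    rw [Nat.cast_sub hβN]
  have hABn : (α : ℝ) + (β : ℝ) ≤ (N : ℝ) := by
    have : α + β ≤ N := by omega
    exact_mod_cast this
  -- endpoints are in the trapezoid
  have endmem : ∀ i ≤ N, pt i (u i) ∈ trap h α β N := by
    intro i hi
    have hiN : (i : ℝ) ≤ (N : ℝ) := by exact_mod_cast hi
    have hi0 : (0 : ℝ) ≤ (i : ℝ) := Nat.cast_nonneg i
    rcases hvals i hi with hv | hv
    · refine ⟨?_, ?_, ?_, ?_⟩ <;> simp only [pt_zero, pt_one, hv] <;> nlinarith
    · have hαi : (α : ℝ) ≤ (i : ℝ) := by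
        have : α ≤ i := by
          by_contra hc; push_neg at hc
          exact hne (by rw [← hv]; exact hαmin _ hc)
        exact_mod_cast this
      have hiβ : (i : ℝ) ≤ (N : ℝ) - (β : ℝ) := by
        have : i ≤ N - β := by
          by_contra hc; push_neg at hc
          exact hne (by rw [← hv]; exact hβmax _ hc hi)
        rw [← hcast]; exact_mod_cast this
      refine ⟨?_, ?_, ?_, ?_⟩ <;> simp only [pt_zero, pt_one, hv] <;> nlinarith
  -- vertices are on the curve
  have memcurve : ∀ i ≤ N, pt i (u i) ∈ polyCurve u N := by
    intro i hi
    rcases lt_or_eq_of_le hi with hlt | heq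
    · exact mem_biUnion (Finset.mem_range.mpr hlt) (left_mem_segment ℝ _ _)
    · subst heq
      have h1 : i - 1 < i := by omega
      have h2 : ((i - 1 : ℕ) : ℝ) + 1 = (i : ℝ) := by
        have : ((i - 1 : ℕ) : ℝ) = (i : ℝ) - 1 := by
          rw [Nat.cast_sub (by omega)]; norm_num
        rw [this]; ring
      have h3 : (i - 1) + 1 = i := by omega
      refine mem_biUnion (Finset.mem_range.mpr h1) ?_
      rw [show pt (i:ℝ) (u i) = pt ((((i-1:ℕ)):ℝ)+1) (u ((i-1) + 1)) from by rw [h2, h3]]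
      exact right_mem_segment ℝ _ _
  apply Subset.antisymm
  · apply convexHull_min ?_ (trap_convex h α β N)
    intro p hp
    simp only [polyCurve, mem_iUnion] at hp
    obtain ⟨i, hi, hp⟩ := hp
    have hiN : i < N := Finset.mem_range.mp hi
    have m1 := endmem i (by omega)
    have m2 := endmem (i+1) (by omega)
    have hc2 : ((i + 1 : ℕ) : ℝ) = (i : ℝ) + 1 := by push_cast; ring
    rw [hc2] at m2
    exact (trap_convex h α β N).segment_subset m1 m2 hp
  · intro p hp
    obtain ⟨c1, c2, c3, c4⟩ := hp
    set t := p 1 / h with htdef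
    have ht0 : 0 ≤ t := div_nonneg c1 hh.le
    have ht1 : t ≤ 1 := (div_le_one hh).mpr c2
    have hth : t * h = p 1 := by rw [htdef]; field_simp
    -- vertices in hull
    have hv0 : pt 0 0 ∈ convexHull ℝ (polyCurve u N) := by
      have := memcurve 0 (by omega)
      rw [show ((0:ℕ):ℝ) = (0:ℝ) by norm_num, hu0] at this
      exact subset_convexHull ℝ _ this
    have hv1 : pt N 0 ∈ convexHull ℝ (polyCurve u N) := by
      have := memcurve N le_rfl
      rw [huN] at this
      exact subset_convexHull ℝ _ this
    have hv2 : pt α h ∈ convexHull ℝ (polyCurve u N) := by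
      have := memcurve α hαN
      rw [hαh] at this
      exact subset_convexHull ℝ _ this
    have hv3 : pt ((N:ℝ) - (β:ℝ)) h ∈ convexHull ℝ (polyCurve u N) := by
      have := memcurve (N - β) (by omega)
      rw [hβh, hcast] at this
      exact subset_convexHull ℝ _ this
    have hq0 : pt (t * α) (t * h) ∈ convexHull ℝ (polyCurve u N) := by
      have := (convex_convexHull ℝ (polyCurve u N)).segment_subset hv0 hv2
        (seg_mem 0 0 α h t ht0 ht1)
      rw [show (1-t)*0+t*(α:ℝ) = t * α from by ring, show (1-t)*0+t*h = t*h from by ring] at this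
      exact this
    have hq1 : pt ((N:ℝ) - t * β) (t * h) ∈ convexHull ℝ (polyCurve u N) := by
      have := (convex_convexHull ℝ (polyCurve u N)).segment_subset hv1 hv3
        (seg_mem (N:ℝ) 0 ((N:ℝ)-(β:ℝ)) h t ht0 ht1)
      rw [show (1-t)*(N:ℝ)+t*((N:ℝ)-(β:ℝ)) = (N:ℝ) - t * β from by ring,
        show (1-t)*0+t*h = t*h from by ring] at this
      exact this
    have b1 : t * α ≤ p 0 := by
      nlinarith [show t*h*(α:ℝ) = p 1 * α from by rw [hth], c3, hh]
    have b2 : p 0 ≤ (N:ℝ) - t * β := by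
      nlinarith [show t*h*(β:ℝ) = p 1 * β from by rw [hth], c4, hh]
    obtain ⟨s, hs0, hs1, hx⟩ := exists_t b1 b2
    have hy : p 1 = (1-s)*(t*h) + s*(t*h) := by rw [hth]; ring
    exact (convex_convexHull ℝ (polyCurve u N)).segment_subset hq0 hq1
      (seg_mem' _ _ _ _ s hs0 hs1 hx hy)

/-- Inconstancy of a finite `{0,h}`-valued sequence `u₀,…,u_N` with `u₀ = 0 = u_N`, in
terms of the counts of length-2 blocks, the length `α` of the longest initial string of
`0`'s and the length `β` of the longest final string of `0`'s. -/
theorem polyIncon_binary_finite_beta_pos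
    (h : ℝ) (hh : 0 < h) (N : ℕ) (hN : 2 ≤ N) (u : ℕ → ℝ)
    (hvals : ∀ i ≤ N, u i = 0 ∨ u i = h) (hu0 : u 0 = 0) (huN : u N = 0)
    (α : ℕ) (hα1 : 1 ≤ α) (hαN : α ≤ N) (hαh : u α = h) (hαmin : ∀ i < α, u i = 0)
    (β : ℕ) (hβ1 : 1 ≤ β) (hβN : β ≤ N) (hβh : u (N - β) = h)
    (hβmax : ∀ i, N - β < i → i ≤ N → u i = 0) :
    polyIncon u N =
      2 * ((blockCount u N 0 0 : ℝ) + (blockCount u N h h : ℝ)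
            + Real.sqrt (1 + h ^ 2) * ((blockCount u N 0 h : ℝ) + (blockCount u N h 0 : ℝ)))
        / (Real.sqrt (h ^ 2 + (α : ℝ) ^ 2) + (N : ℝ) - (α : ℝ) - (β : ℝ)
            + Real.sqrt (h ^ 2 + (β : ℝ) ^ 2) + (N : ℝ)) := by
  have hne : h ≠ 0 := hh.ne'
  have hαle : α ≤ N - β := by
    by_contra hc
    push_neg at hc
    exact hne (by rw [← hβh]; exact hαmin _ hc)
  have hABn : (α : ℝ) + (β : ℝ) ≤ (N : ℝ) := by
    have : α + β ≤ N := by omega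
    exact_mod_cast this
  have hA : (0:ℝ) < α := by exact_mod_cast hα1
  have hB : (0:ℝ) < β := by exact_mod_cast hβ1
  -- length computation
  have key : ∀ i ∈ Finset.range N,
      Real.sqrt (1 + (u (i+1) - u i)^2) =
        (if u i = 0 ∧ u (i+1) = 0 then (1:ℝ) else 0)
        + (if u i = h ∧ u (i+1) = h then (1:ℝ) else 0)
        + Real.sqrt (1+h^2) * ((if u i = 0 ∧ u (i+1) = h then (1:ℝ) else 0)
            + (if u i = h ∧ u (i+1) = 0 then (1:ℝ) else 0)) := by
    intro i hi
    have hi' : i < N := Finset.mem_range.mp hi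
    rcases hvals i (by omega) with h1 | h1 <;> rcases hvals (i+1) (by omega) with h2 | h2 <;>
      simp [h1, h2, hh.ne, hh.ne'] <;> ring_nf
  have hbc : ∀ j j' : ℝ, ((blockCount u N j j' : ℕ) : ℝ)
      = ∑ i ∈ Finset.range N, if u i = j ∧ u (i+1) = j' then (1:ℝ) else 0 := by
    intro j j'
    rw [blockCount, Finset.sum_boole]
  have hlen : polyLength u N = (blockCount u N 0 0 : ℝ) + (blockCount u N h h : ℝ)
      + Real.sqrt (1 + h ^ 2) * ((blockCount u N 0 h : ℝ) + (blockCount u N h 0 : ℝ)) := by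
    rw [polyLength, hbc 0 0, hbc h h, hbc 0 h, hbc h 0, mul_add, Finset.mul_sum,
      Finset.mul_sum, ← Finset.sum_add_distrib, ← Finset.sum_add_distrib,
      ← Finset.sum_add_distrib]
    exact Finset.sum_congr rfl (fun i hi => by rw [key i hi]; ring)
  rw [polyIncon, polyDelta,
    hull_eq h hh N hN u hvals hu0 huN α hα1 hαN hαh hαmin β hβ1 hβN hβh hβmax,
    trap_perimeter hh hA hB hABn, hlen]
  have e1 : Real.sqrt ((α:ℝ)^2 + h^2) = Real.sqrt (h^2 + (α:ℝ)^2) := by rw [add_comm]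
  have e2 : Real.sqrt ((β:ℝ)^2 + h^2) = Real.sqrt (h^2 + (β:ℝ)^2) := by rw [add_comm]
  rw [e1, e2]
  ring_nf
end
end
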